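/- arXiv:cs/0506104 — 6 statements merged into one kernel-verified Lean document; each statement's English description precedes it below -/
import Mathlib

section
/- Every 2-CNF theory T with n = |At(T)| atoms has at most 3^(n/3) minimal models. -/
open Classical

/-- A literal: `(true, a)` is the atom `a`, `(false, a)` is the negated atom `¬ a`. -/
abbrev Lit : Type := Bool × ℕ

/-- A clause: a finite set of literals, viewed as the disjunction of its literals. -/
abbrev Clause : Type := Finset Lit

/-- A CNF theory: a finite set of clauses. -/
abbrev CTheory : Type := Finset Clause

/-- A clause is proper: it contains no atom together with its negation. -/
def Clause.ok (c : Clause) : Prop :=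
  ∀ a : ℕ, ¬ (((true, a) : Lit) ∈ c ∧ ((false, a) : Lit) ∈ c)

/-- The set of atoms occurring in a clause. -/
def clauseAtoms (c : Clause) : Finset ℕ := c.image Prod.snd

/-- `At(T)`: the set of atoms occurring in a CNF theory. -/
def thAtoms (T : CTheory) : Finset ℕ := T.sup clauseAtoms

/-- A set of atoms `M` satisfies a literal `l`. -/
def satLit (M : Finset ℕ) (l : Lit) : Prop := if l.1 then l.2 ∈ M else l.2 ∉ M

/-- `M` is a model of the CNF theory `T`. -/
def isModel (M : Finset ℕ) (T : CTheory) : Prop := ∀ c ∈ T, ∃ l ∈ c, satLit M l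

/-- `M` is a minimal model of `T`: a model `M ⊆ At(T)` no proper subset of which is a model. -/
def isMinModel (M : Finset ℕ) (T : CTheory) : Prop :=
  isModel M T ∧ M ⊆ thAtoms T ∧ ∀ M' : Finset ℕ, M' ⊂ M → ¬ isModel M' T

/-! ### Basic helpers -/

lemma mem_clauseAtoms {c : Clause} {x : ℕ} :
    x ∈ clauseAtoms c ↔ ∃ l ∈ c, l.2 = x := by
  simp [clauseAtoms]

lemma mem_thAtoms {T : CTheory} {x : ℕ} :
    x ∈ thAtoms T ↔ ∃ c ∈ T, ∃ l ∈ c, l.2 = x := by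
  simp [thAtoms, Finset.mem_sup, mem_clauseAtoms]

lemma atom_mem {T : CTheory} {c : Clause} {l : Lit} (hc : c ∈ T) (hl : l ∈ c) :
    l.2 ∈ thAtoms T := mem_thAtoms.mpr ⟨c, hc, l, hl, rfl⟩

lemma satLit_iff {M : Finset ℕ} {l : Lit} : satLit M l ↔ (l.2 ∈ M ↔ l.1 = true) := by
  unfold satLit; cases h : l.1 <;> simp [h]

lemma satLit_congr {M N : Finset ℕ} {l : Lit} (h : l.2 ∈ M ↔ l.2 ∈ N) :
    satLit M l ↔ satLit N l := by
  rw [satLit_iff, satLit_iff, h]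

lemma lit_atom_ne {l : Lit} {a : ℕ} {v : Bool} (h1 : l ≠ (v, a)) (h2 : l ≠ (!v, a)) :
    l.2 ≠ a := by
  obtain ⟨b, y⟩ := l
  intro h
  simp only at h; subst h
  cases b <;> cases v <;> simp_all

lemma ok_subset {c c' : Clause} (h : c' ⊆ c) (hc : Clause.ok c) : Clause.ok c' :=
  fun a ha => hc a ⟨h ha.1, h ha.2⟩

lemma minM_finite (T : CTheory) : {M : Finset ℕ | isMinModel M T}.Finite := by
  apply Set.Finite.subset ((thAtoms T).powerset.finite_toSet)
  intro M hM
  simpa [Finset.mem_powerset] using hM.2.1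

/-! ### Assignment -/

def assign (a : ℕ) (v : Bool) (T : CTheory) : CTheory :=
  (T.filter (fun c => ((v, a) : Lit) ∉ c)).image (fun c => c.erase ((!v, a) : Lit))

lemma mem_assign {a : ℕ} {v : Bool} {T : CTheory} {c' : Clause} :
    c' ∈ assign a v T ↔ ∃ c ∈ T, ((v, a) : Lit) ∉ c ∧ c' = c.erase ((!v, a) : Lit) := by
  simp [assign, eq_comm, and_assoc]

lemma assign_atoms {a : ℕ} {v : Bool} {T : CTheory} :
    thAtoms (assign a v T) ⊆ (thAtoms T).erase a := by
  intro x hx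
  obtain ⟨c', hc', l, hl, rfl⟩ := mem_thAtoms.mp hx
  obtain ⟨c, hc, hvc, rfl⟩ := mem_assign.mp hc'
  obtain ⟨hlne, hlc⟩ := Finset.mem_erase.mp hl
  have hne : l.2 ≠ a := lit_atom_ne (fun h => hvc (h ▸ hlc)) hlne
  exact Finset.mem_erase.mpr ⟨hne, atom_mem hc hlc⟩

lemma assign_ok {a : ℕ} {v : Bool} {T : CTheory} (hok : ∀ c ∈ T, Clause.ok c) :
    ∀ c' ∈ assign a v T, Clause.ok c' := by
  intro c' hc'
  obtain ⟨c, hc, _, rfl⟩ := mem_assign.mp hc'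
  exact ok_subset (Finset.erase_subset _ _) (hok c hc)

lemma assign_two {a : ℕ} {v : Bool} {T : CTheory} (h2 : ∀ c ∈ T, c.card ≤ 2) :
    ∀ c' ∈ assign a v T, c'.card ≤ 2 := by
  intro c' hc'
  obtain ⟨c, hc, _, rfl⟩ := mem_assign.mp hc'
  exact le_trans (Finset.card_le_card (Finset.erase_subset _ _)) (h2 c hc)

/-! ### Key lemma : minimal models restrict to minimal models of the assigned theory -/

lemma key {T : CTheory} {M : Finset ℕ} {a : ℕ} {v : Bool}
    (hm : isMinModel M T) (hv : a ∈ M ↔ v = true) :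
    isMinModel (M.erase a) (assign a v T) := by
  obtain ⟨hmod, hsub, hmin⟩ := hm
  have hsatva : satLit M ((v, a) : Lit) := satLit_iff.mpr hv
  refine ⟨?_, ?_, ?_⟩
  · -- model
    intro c' hc'
    obtain ⟨c, hc, hvc, rfl⟩ := mem_assign.mp hc'
    obtain ⟨l, hl, hsl⟩ := hmod c hc
    have hl2 : l.2 ≠ a := by
      refine lit_atom_ne (fun h => hvc (h ▸ hl)) (fun h => ?_)
      rw [h] at hsl
      cases v <;> simp_all [satLit]
    refine ⟨l, Finset.mem_erase_of_ne_of_mem (fun h => hl2 (by rw [h])) hl, ?_⟩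
    exact (satLit_congr (by simp [Finset.mem_erase, hl2])).mpr hsl
  · -- subset of atoms
    intro b hb
    obtain ⟨hba, hbM⟩ := Finset.mem_erase.mp hb
    have hprop : ¬ isModel (M.erase b) T := hmin _ (Finset.erase_ssubset hbM)
    unfold isModel at hprop; push_neg at hprop
    obtain ⟨c, hc, hall⟩ := hprop
    obtain ⟨l₀, hl₀, hs₀⟩ := hmod c hc
    have hl0 : l₀ = ((true, b) : Lit) := by
      obtain ⟨bb, y⟩ := l₀
      by_cases hy : y = b
      · subst hy
        cases bb
        · exfalso; simp [satLit] at hs₀; exact hs₀ hbM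
        · rfl
      · exact absurd ((satLit_congr (by simp [Finset.mem_erase, hy])).mpr hs₀) (hall _ hl₀)
    subst hl0
    have hvac : ((v, a) : Lit) ∉ c := by
      intro hvc
      have hab : a ≠ b := Ne.symm hba
      exact hall _ hvc ((satLit_congr (by simp [Finset.mem_erase, hab])).mpr hsatva)
    have hcmem : c.erase ((!v, a) : Lit) ∈ assign a v T := mem_assign.mpr ⟨c, hc, hvac, rfl⟩
    refine mem_thAtoms.mpr ⟨_, hcmem, ((true, b) : Lit), ?_, rfl⟩
    refine Finset.mem_erase_of_ne_of_mem ?_ hl₀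
    intro h
    exact hba (congrArg Prod.snd h)
  · -- minimality
    intro M' hM' hmodel'
    cases v with
    | false =>
      have haM : a ∉ M := by simpa using hv
      rw [Finset.erase_eq_of_notMem haM] at hM'
      refine hmin M' hM' ?_
      intro c hc
      by_cases hvc : ((false, a) : Lit) ∈ c
      · refine ⟨_, hvc, ?_⟩
        have : a ∉ M' := fun h => haM (hM'.1 h)
        simpa [satLit] using this
      · obtain ⟨l, hl, hsl⟩ := hmodel' _ (mem_assign.mpr ⟨c, hc, hvc, rfl⟩)
        exact ⟨l, Finset.erase_subset _ _ hl, hsl⟩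
    | true =>
      have haM : a ∈ M := hv.mpr rfl
      have hM'a : a ∉ M' := fun h => (Finset.mem_erase.mp (hM'.1 h)).1 rfl
      have hss : insert a M' ⊂ M := by
        have hsub' : insert a M' ⊆ M := by
          intro x hx
          rcases Finset.mem_insert.mp hx with rfl | hx
          · exact haM
          · exact Finset.mem_of_mem_erase (hM'.1 hx)
        rw [Finset.ssubset_iff_of_subset hsub']
        obtain ⟨x, hx, hxM'⟩ := Finset.exists_of_ssubset hM'
        obtain ⟨hxa, hxM⟩ := Finset.mem_erase.mp hx
        exact ⟨x, hxM, by simp [Finset.mem_insert, hxa, hxM']⟩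
      refine hmin _ hss ?_
      intro c hc
      by_cases hvc : ((true, a) : Lit) ∈ c
      · exact ⟨_, hvc, by simp [satLit]⟩
      · obtain ⟨l, hl, hsl⟩ := hmodel' _ (mem_assign.mpr ⟨c, hc, hvc, rfl⟩)
        obtain ⟨hlne, hlc⟩ := Finset.mem_erase.mp hl
        have hl2 : l.2 ≠ a := lit_atom_ne (fun h => hvc (h ▸ hlc)) hlne
        exact ⟨l, hlc, (satLit_congr (by simp [Finset.mem_insert, hl2])).mpr hsl⟩

/-! ### Patterns and iterated assignment -/

def pat (L : List (ℕ × Bool)) (M : Finset ℕ) : Prop :=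
  ∀ p ∈ L, (p.1 ∈ M ↔ p.2 = true)

def Theta : List (ℕ × Bool) → CTheory → CTheory
  | [], T => T
  | p :: L, T => Theta L (assign p.1 p.2 T)

lemma Theta_ok : ∀ (L : List (ℕ × Bool)) (T : CTheory), (∀ c ∈ T, Clause.ok c) →
    ∀ c ∈ Theta L T, Clause.ok c
  | [], T, h => h
  | p :: L, T, h => Theta_ok L _ (assign_ok h)

lemma Theta_two : ∀ (L : List (ℕ × Bool)) (T : CTheory), (∀ c ∈ T, c.card ≤ 2) →
    ∀ c ∈ Theta L T, c.card ≤ 2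
  | [], T, h => h
  | p :: L, T, h => Theta_two L _ (assign_two h)

lemma Theta_atoms : ∀ (L : List (ℕ × Bool)) (T : CTheory),
    thAtoms (Theta L T) ⊆ thAtoms T \ (L.map Prod.fst).toFinset := by
  intro L
  induction L with
  | nil => intro T; simp [Theta]
  | cons p L IH =>
    intro T x hx
    have h1 := IH (assign p.1 p.2 T) hx
    rw [Finset.mem_sdiff] at h1
    have h2 := assign_atoms h1.1
    rw [Finset.mem_erase] at h2
    rw [Finset.mem_sdiff]
    refine ⟨h2.2, ?_⟩
    simp only [List.map_cons, List.toFinset_cons, Finset.mem_insert]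
    push_neg
    exact ⟨h2.1, by simpa using h1.2⟩

lemma pattern_count : ∀ (L : List (ℕ × Bool)) (T : CTheory), (L.map Prod.fst).Nodup →
    {M : Finset ℕ | isMinModel M T ∧ pat L M}.ncard ≤
      {M : Finset ℕ | isMinModel M (Theta L T)}.ncard := by
  intro L
  induction L with
  | nil =>
    intro T _
    exact Set.ncard_le_ncard (fun M hM => hM.1) (minM_finite _)
  | cons p L IH =>
    intro T hnd
    simp only [List.map_cons, List.nodup_cons] at hnd
    obtain ⟨hp1, hnd'⟩ := hnd
    have step : {M : Finset ℕ | isMinModel M T ∧ pat (p :: L) M}.ncard ≤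
        {N : Finset ℕ | isMinModel N (assign p.1 p.2 T) ∧ pat L N}.ncard := by
      refine Set.ncard_le_ncard_of_injOn (fun M => M.erase p.1) ?_ ?_
        ((minM_finite _).subset (fun N hN => hN.1))
      · rintro M ⟨hm, hpat⟩
        have hv : p.1 ∈ M ↔ p.2 = true := hpat p (List.mem_cons_self)
        refine ⟨key hm hv, ?_⟩
        intro q hq
        have hq1 : q.1 ≠ p.1 := by
          intro h
          exact hp1 (h ▸ List.mem_map_of_mem (f := Prod.fst) hq)
        rw [show (q.1 ∈ M.erase p.1) = (q.1 ∈ M) by simp [Finset.mem_erase, hq1]]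
        exact hpat q (List.mem_cons_of_mem _ hq)
      · rintro M₁ ⟨_, h₁⟩ M₂ ⟨_, h₂⟩ he
        have he' : M₁.erase p.1 = M₂.erase p.1 := he
        have hv₁ := h₁ p (List.mem_cons_self)
        have hv₂ := h₂ p (List.mem_cons_self)
        ext x
        by_cases hx : x = p.1
        · subst hx; rw [hv₁, hv₂]
        · calc x ∈ M₁ ↔ x ∈ M₁.erase p.1 := by simp [Finset.mem_erase, hx]
            _ ↔ x ∈ M₂.erase p.1 := by rw [he']
            _ ↔ x ∈ M₂ := by simp [Finset.mem_erase, hx]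
    exact le_trans step (IH _ hnd')

/-! ### The bound function -/

noncomputable def B (m : ℕ) : ℝ := (3 : ℝ) ^ ((m : ℝ) / 3)

lemma B_nonneg (m : ℕ) : 0 ≤ B m := Real.rpow_nonneg (by norm_num) _

lemma B_mono {m k : ℕ} (h : m ≤ k) : B m ≤ B k :=
  Real.rpow_le_rpow_of_exponent_le (by norm_num)
    (by apply div_le_div_of_nonneg_right _ (by norm_num); exact_mod_cast h)

lemma B_factor {k n : ℕ} (h : k ≤ n) : B n = B (n - k) * (3 : ℝ) ^ ((k : ℝ) / 3) := by
  unfold B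
  rw [← Real.rpow_add (by norm_num)]
  congr 1
  rw [Nat.cast_sub h]
  ring

lemma cube_le {x : ℝ} {k : ℕ} (hx : 0 ≤ x) (h : x ^ (3 : ℕ) ≤ 3 ^ (k : ℕ)) :
    x ≤ (3 : ℝ) ^ ((k : ℝ) / 3) := by
  have h3 : ((3 : ℝ) ^ ((k : ℝ) / 3)) ^ (3 : ℕ) = 3 ^ (k : ℕ) := by
    rw [← Real.rpow_natCast ((3 : ℝ) ^ ((k : ℝ) / 3)) 3, ← Real.rpow_mul (by norm_num)]
    rw [show (k : ℝ) / 3 * (3 : ℕ) = ((k : ℕ) : ℝ) by push_cast; ring]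
    rw [Real.rpow_natCast]
  have h' : x ^ (3 : ℕ) ≤ ((3 : ℝ) ^ ((k : ℝ) / 3)) ^ (3 : ℕ) := by rw [h3]; exact h
  exact le_of_pow_le_pow_left₀ (by norm_num) (Real.rpow_nonneg (by norm_num) _) h'

lemma two_le_cbrt : (2 : ℝ) ≤ (3 : ℝ) ^ ((2 : ℝ) / 3) := by
  have := cube_le (x := 2) (k := 2) (by norm_num) (by norm_num)
  simpa using this

lemma four_le_cbrt : (4 : ℝ) ≤ (3 : ℝ) ^ ((4 : ℝ) / 3) := by
  have := cube_le (x := 4) (k := 4) (by norm_num) (by norm_num)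
  simpa using this

lemma R1 {n : ℕ} : B (n - 1) ≤ B n := B_mono (Nat.sub_le _ _)

lemma R2 {n : ℕ} (h : 2 ≤ n) : B (n - 2) + B (n - 2) ≤ B n := by
  rw [B_factor h]
  have hb := B_nonneg (n - 2)
  nlinarith [two_le_cbrt]

lemma R3 {n : ℕ} (h : 3 ≤ n) : B (n - 3) + B (n - 3) + B (n - 3) ≤ B n := by
  rw [B_factor h]
  rw [show ((3 : ℕ) : ℝ) / 3 = 1 by norm_num, Real.rpow_one]
  have hb := B_nonneg (n - 3)
  nlinarith

lemma R14 {n : ℕ} (h : 4 ≤ n) : B (n - 1) + B (n - 4) ≤ B n := by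
  have h3 : B (n - 1) = B (n - 4) * 3 := by
    have h' : 3 ≤ n - 1 := by omega
    rw [B_factor h', show n - 1 - 3 = n - 4 by omega,
      show ((3 : ℕ) : ℝ) / 3 = 1 by norm_num, Real.rpow_one]
  rw [B_factor h, h3]
  have hb := B_nonneg (n - 4)
  nlinarith [four_le_cbrt]

/-! ### ncard splitting -/

lemma ncard_split2 {A A₁ A₂ : Set (Finset ℕ)} (h : A ⊆ A₁ ∪ A₂)
    (h1 : A₁.Finite) (h2 : A₂.Finite) : A.ncard ≤ A₁.ncard + A₂.ncard :=
  le_trans (Set.ncard_le_ncard h (h1.union h2)) (Set.ncard_union_le _ _)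

lemma ncard_split3 {A A₁ A₂ A₃ : Set (Finset ℕ)} (h : A ⊆ A₁ ∪ A₂ ∪ A₃)
    (h1 : A₁.Finite) (h2 : A₂.Finite) (h3 : A₃.Finite) :
    A.ncard ≤ A₁.ncard + A₂.ncard + A₃.ncard := by
  refine le_trans (Set.ncard_le_ncard h ((h1.union h2).union h3)) ?_
  refine le_trans (Set.ncard_union_le _ _) ?_
  exact Nat.add_le_add_right (Set.ncard_union_le _ _) _

/-! ### Master pattern bound -/

lemma pattern_master {n : ℕ}
    (IH : ∀ m, m < n → ∀ T' : CTheory, (∀ c ∈ T', Clause.ok c) → (∀ c ∈ T', c.card ≤ 2) →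
      (thAtoms T').card = m → ({M : Finset ℕ | isMinModel M T'}.ncard : ℝ) ≤ B m)
    {T : CTheory} (hok : ∀ c ∈ T, Clause.ok c) (h2 : ∀ c ∈ T, c.card ≤ 2)
    (hn : (thAtoms T).card = n)
    (L : List (ℕ × Bool)) (hne : L ≠ [])
    (hnd : (L.map Prod.fst).Nodup) (hsub : ∀ p ∈ L, p.1 ∈ thAtoms T) :
    ({M : Finset ℕ | isMinModel M T ∧ pat L M}.ncard : ℝ) ≤ B (n - L.length) := by
  set S := (L.map Prod.fst).toFinset with hSdef
  have hS : S ⊆ thAtoms T := by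
    intro x hx
    rw [hSdef, List.mem_toFinset, List.mem_map] at hx
    obtain ⟨p, hp, rfl⟩ := hx
    exact hsub p hp
  have hScard : S.card = L.length := by
    rw [hSdef, List.toFinset_card_of_nodup hnd, List.length_map]
  have hatoms : thAtoms (Theta L T) ⊆ thAtoms T \ S := Theta_atoms L T
  have hcard : (thAtoms (Theta L T)).card ≤ n - L.length := by
    calc (thAtoms (Theta L T)).card ≤ (thAtoms T \ S).card := Finset.card_le_card hatoms
      _ = n - L.length := by rw [Finset.card_sdiff_of_subset hS, hn, hScard]
  have hlen : 1 ≤ L.length := List.length_pos_iff.mpr hne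
  have hln : L.length ≤ n := by
    calc L.length = S.card := hScard.symm
      _ ≤ (thAtoms T).card := Finset.card_le_card hS
      _ = n := hn
  have hlt : (thAtoms (Theta L T)).card < n :=
    lt_of_le_of_lt hcard (Nat.sub_lt (by omega) (by omega))
  have hb := IH _ hlt (Theta L T) (Theta_ok L T hok) (Theta_two L T h2) rfl
  calc ({M : Finset ℕ | isMinModel M T ∧ pat L M}.ncard : ℝ)
      ≤ ({M : Finset ℕ | isMinModel M (Theta L T)}.ncard : ℝ) :=
        Nat.cast_le.mpr (pattern_count L T hnd)
    _ ≤ B ((thAtoms (Theta L T)).card) := hb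
    _ ≤ B (n - L.length) := B_mono hcard

/-! ### Structural lemmas -/

/-- In a minimal model, every atom has a "witness" clause. -/
lemma witness_clause {T : CTheory} {M : Finset ℕ} {b : ℕ}
    (hm : isMinModel M T) (hb : b ∈ M) :
    ∃ c ∈ T, ((true, b) : Lit) ∈ c ∧ ∀ l ∈ c, l ≠ ((true, b) : Lit) → ¬ satLit M l := by
  obtain ⟨hmod, _, hmin⟩ := hm
  have hprop : ¬ isModel (M.erase b) T := hmin _ (Finset.erase_ssubset hb)
  unfold isModel at hprop; push_neg at hprop
  obtain ⟨c, hc, hall⟩ := hprop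
  obtain ⟨l₀, hl₀, hs₀⟩ := hmod c hc
  have hl0 : l₀ = ((true, b) : Lit) := by
    obtain ⟨bb, y⟩ := l₀
    by_cases hy : y = b
    · subst hy
      cases bb
      · exfalso; simp [satLit] at hs₀; exact hs₀ hb
      · rfl
    · exact absurd ((satLit_congr (by simp [Finset.mem_erase, hy])).mpr hs₀) (hall _ hl₀)
  subst hl0
  refine ⟨c, hc, hl₀, ?_⟩
  intro l hl hlne hsl
  by_cases hy : l.2 = b
  · obtain ⟨bb, y⟩ := l
    simp only at hy; subst hy
    cases bb
    · simp [satLit] at hsl; exact hsl hb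
    · exact hlne rfl
  · exact hall _ hl ((satLit_congr (by simp [Finset.mem_erase, hy])).mpr hsl)

/-- An atom with no positive occurrence is not in any minimal model. -/
lemma pure_neg_not_mem {T : CTheory} {M : Finset ℕ} {a : ℕ}
    (hm : isMinModel M T) (hpn : ∀ c ∈ T, ((true, a) : Lit) ∉ c) : a ∉ M := by
  intro ha
  obtain ⟨c, hc, hmem, _⟩ := witness_clause hm ha
  exact hpn c hc hmem

/-- Forcing via a positive binary clause. -/
lemma force_pos {T : CTheory} {M : Finset ℕ} {x y : ℕ}
    (hc : ({((true, x) : Lit), ((true, y) : Lit)} : Clause) ∈ T)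
    (hmod : isModel M T) (hx : x ∉ M) : y ∈ M := by
  obtain ⟨l, hl, hsl⟩ := hmod _ hc
  rcases Finset.mem_insert.mp hl with rfl | hl
  · exact absurd (by simpa [satLit] using hsl) hx
  · rw [Finset.mem_singleton] at hl
    subst hl
    simpa [satLit] using hsl

/-! ### The monotone (positive binary) case: neighbourhoods -/

def nbr (T : CTheory) (a : ℕ) : Finset ℕ :=
  ((T.filter fun c => ((true, a) : Lit) ∈ c).sup clauseAtoms).erase a

def Mono (T : CTheory) : Prop :=
  ∀ c ∈ T, ∃ x y : ℕ, x ≠ y ∧ c = {((true, x) : Lit), ((true, y) : Lit)}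

lemma mem_nbr {T : CTheory} (hM : Mono T) {a b : ℕ} :
    b ∈ nbr T a ↔ b ≠ a ∧ ({((true, a) : Lit), ((true, b) : Lit)} : Clause) ∈ T := by
  constructor
  · intro hb
    obtain ⟨hba, hb⟩ := Finset.mem_erase.mp hb
    rw [Finset.mem_sup] at hb
    obtain ⟨c, hc, hbc⟩ := hb
    rw [Finset.mem_filter] at hc
    obtain ⟨hcT, hac⟩ := hc
    obtain ⟨x, y, hxy, rfl⟩ := hM c hcT
    obtain ⟨l, hl, hl2⟩ := mem_clauseAtoms.mp hbc
    have hax : a = x ∨ a = y := by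
      rcases Finset.mem_insert.mp hac with h | h
      · exact Or.inl (congrArg Prod.snd h)
      · rw [Finset.mem_singleton] at h
        exact Or.inr (congrArg Prod.snd h)
    have hbxy : b = x ∨ b = y := by
      rcases Finset.mem_insert.mp hl with rfl | h
      · exact Or.inl hl2.symm
      · rw [Finset.mem_singleton] at h; subst h; exact Or.inr hl2.symm
    refine ⟨hba, ?_⟩
    rcases hax with rfl | rfl
    · rcases hbxy with rfl | rfl
      · exact absurd rfl hba
      · exact hcT
    · rcases hbxy with rfl | rfl
      · rw [Finset.pair_comm]; exact hcT
      · exact absurd rfl hba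
  · rintro ⟨hba, hc⟩
    rw [nbr, Finset.mem_erase]
    refine ⟨hba, ?_⟩
    rw [Finset.mem_sup]
    refine ⟨_, Finset.mem_filter.mpr ⟨hc, Finset.mem_insert_self _ _⟩, ?_⟩
    exact mem_clauseAtoms.mpr ⟨((true, b) : Lit), by simp, rfl⟩

lemma nbr_nonempty {T : CTheory} (hM : Mono T) {a : ℕ} (ha : a ∈ thAtoms T) :
    (nbr T a).Nonempty := by
  obtain ⟨c, hc, l, hl, hl2⟩ := mem_thAtoms.mp ha
  obtain ⟨x, y, hxy, rfl⟩ := hM c hc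
  have hax : a = x ∨ a = y := by
    rcases Finset.mem_insert.mp hl with rfl | h
    · exact Or.inl hl2.symm
    · rw [Finset.mem_singleton] at h; subst h; exact Or.inr hl2.symm
  rcases hax with rfl | rfl
  · exact ⟨y, (mem_nbr hM).mpr ⟨hxy.symm, hc⟩⟩
  · exact ⟨x, (mem_nbr hM).mpr ⟨hxy, by rw [Finset.pair_comm]; exact hc⟩⟩

/-- In the monotone case, a member of a minimal model has a neighbour outside the model. -/
lemma witness_nbr {T : CTheory} (hM : Mono T) {M : Finset ℕ} {a : ℕ}
    (hm : isMinModel M T) (ha : a ∈ M) : ∃ b ∈ nbr T a, b ∉ M := by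
  obtain ⟨c, hc, hmem, hall⟩ := witness_clause hm ha
  obtain ⟨x, y, hxy, rfl⟩ := hM c hc
  have hax : a = x ∨ a = y := by
    rcases Finset.mem_insert.mp hmem with h | h
    · exact Or.inl (congrArg Prod.snd h)
    · rw [Finset.mem_singleton] at h
      exact Or.inr (congrArg Prod.snd h)
  rcases hax with rfl | rfl
  · refine ⟨y, (mem_nbr hM).mpr ⟨hxy.symm, hc⟩, ?_⟩
    have := hall ((true, y) : Lit) (by simp) (by simp [Ne.symm hxy])
    simpa [satLit] using this
  · refine ⟨x, (mem_nbr hM).mpr ⟨hxy, by rw [Finset.pair_comm]; exact hc⟩, ?_⟩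
    have := hall ((true, x) : Lit) (by simp) (by simp [hxy])
    simpa [satLit] using this

/-! ### Small helpers for the main proof -/

lemma pat_nil (M : Finset ℕ) : pat [] M := fun p hp => absurd hp List.not_mem_nil

lemma pat_cons {M : Finset ℕ} {q : ℕ × Bool} {L : List (ℕ × Bool)}
    (h : q.1 ∈ M ↔ q.2 = true) (hL : pat L M) : pat (q :: L) M := by
  intro p hp
  rcases List.mem_cons.mp hp with rfl | hp
  · exact h
  · exact hL p hp

lemma pair_extract {c : Clause} {l₀ : Lit} (h2 : c.card = 2) (hl₀ : l₀ ∈ c) :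
    ∃ l : Lit, l ≠ l₀ ∧ c = {l₀, l} := by
  obtain ⟨u, w, huw, rfl⟩ := Finset.card_eq_two.mp h2
  rcases Finset.mem_insert.mp hl₀ with rfl | h
  · exact ⟨w, Ne.symm huw, rfl⟩
  · rw [Finset.mem_singleton] at h; subst h
    exact ⟨u, huw, Finset.pair_comm _ _⟩

lemma other_atom_ne_pos {c : Clause} {a : ℕ} (hok : Clause.ok c)
    (ha : ((true, a) : Lit) ∈ c) {l : Lit} (hl : l ∈ c) (hne : l ≠ ((true, a) : Lit)) :
    l.2 ≠ a := by
  intro h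
  obtain ⟨b, y⟩ := l
  simp only at h; subst h
  cases b
  · exact hok _ ⟨ha, hl⟩
  · exact hne rfl

lemma other_atom_ne_neg {c : Clause} {a : ℕ} (hok : Clause.ok c)
    (ha : ((false, a) : Lit) ∈ c) {l : Lit} (hl : l ∈ c) (hne : l ≠ ((false, a) : Lit)) :
    l.2 ≠ a := by
  intro h
  obtain ⟨b, y⟩ := l
  simp only at h; subst h
  cases b
  · exact hne rfl
  · exact hok _ ⟨hl, ha⟩

lemma forced_other {T : CTheory} {M : Finset ℕ} {c : Clause} {l₀ l : Lit}
    (hcT : c ∈ T) (hc : c = {l₀, l}) (hmod : isModel M T) (hns : ¬ satLit M l₀) :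
    satLit M l := by
  obtain ⟨l', hl', hs⟩ := hmod c hcT
  rw [hc] at hl'
  rcases Finset.mem_insert.mp hl' with rfl | h
  · exact absurd hs hns
  · rw [Finset.mem_singleton] at h; subst h; exact hs

/-! ### Main induction -/

theorem main_aux : ∀ n : ℕ, ∀ T : CTheory, (∀ c ∈ T, Clause.ok c) → (∀ c ∈ T, c.card ≤ 2) →
    (thAtoms T).card = n → ({M : Finset ℕ | isMinModel M T}.ncard : ℝ) ≤ B n := by
  intro n
  induction n using Nat.strong_induction_on with
  | _ n IH =>
  intro T hok h2 hn
  by_cases hn0 : n = 0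
  · subst hn0
    have hAt : thAtoms T = ∅ := Finset.card_eq_zero.mp hn
    have hsub : {M : Finset ℕ | isMinModel M T} ⊆ {(∅ : Finset ℕ)} := by
      intro M hM
      have hMs := hM.2.1
      rw [hAt] at hMs
      simp [Finset.subset_empty.mp hMs]
    have hle1 : {M : Finset ℕ | isMinModel M T}.ncard ≤ 1 := by
      simpa using Set.ncard_le_ncard hsub (Set.finite_singleton _)
    have hB0 : B 0 = 1 := by simp [B]
    rw [hB0]
    exact_mod_cast hle1
  by_cases hemp : (∅ : Clause) ∈ T
  · have hempty : {M : Finset ℕ | isMinModel M T} = ∅ := by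
      ext M
      simp only [Set.mem_setOf_eq, Set.mem_empty_iff_false, iff_false]
      intro hM
      obtain ⟨l, hl, _⟩ := hM.1 ∅ hemp
      exact absurd hl (Finset.notMem_empty l)
    rw [hempty]
    simpa using B_nonneg n
  by_cases hunit : ∃ c ∈ T, c.card = 1
  · obtain ⟨c, hcT, hc1⟩ := hunit
    obtain ⟨l, rfl⟩ := Finset.card_eq_one.mp hc1
    have hsubU : {M : Finset ℕ | isMinModel M T} ⊆
        {M : Finset ℕ | isMinModel M T ∧ pat [(l.2, l.1)] M} := by
      intro M hM
      refine ⟨hM, pat_cons ?_ (pat_nil M)⟩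
      obtain ⟨l', hl', hs⟩ := hM.1 _ hcT
      rw [Finset.mem_singleton] at hl'
      subst hl'
      exact satLit_iff.mp hs
    have hA := pattern_master IH hok h2 hn [(l.2, l.1)] (by simp) (by simp)
      (by intro p hp
          rcases List.mem_cons.mp hp with rfl | hp
          · exact atom_mem hcT (Finset.mem_singleton_self l)
          · exact absurd hp List.not_mem_nil)
    calc ({M : Finset ℕ | isMinModel M T}.ncard : ℝ)
        ≤ ({M : Finset ℕ | isMinModel M T ∧ pat [(l.2, l.1)] M}.ncard : ℝ) :=
          Nat.cast_le.mpr (Set.ncard_le_ncard hsubU ((minM_finite T).subset (fun M hM => hM.1)))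
      _ ≤ B (n - 1) := hA
      _ ≤ B n := R1
  by_cases hpn : ∃ a ∈ thAtoms T, ∀ c ∈ T, ((true, a) : Lit) ∉ c
  · obtain ⟨a, haT, hneg⟩ := hpn
    have hsubU : {M : Finset ℕ | isMinModel M T} ⊆
        {M : Finset ℕ | isMinModel M T ∧ pat [(a, false)] M} := by
      intro M hM
      exact ⟨hM, pat_cons (by simpa using pure_neg_not_mem hM hneg) (pat_nil M)⟩
    have hA := pattern_master IH hok h2 hn [(a, false)] (by simp) (by simp)
      (by intro p hp
          rcases List.mem_cons.mp hp with rfl | hp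
          · exact haT
          · exact absurd hp List.not_mem_nil)
    calc ({M : Finset ℕ | isMinModel M T}.ncard : ℝ)
        ≤ ({M : Finset ℕ | isMinModel M T ∧ pat [(a, false)] M}.ncard : ℝ) :=
          Nat.cast_le.mpr (Set.ncard_le_ncard hsubU ((minM_finite T).subset (fun M hM => hM.1)))
      _ ≤ B (n - 1) := hA
      _ ≤ B n := R1
  by_cases hboth : ∃ a : ℕ, (∃ c ∈ T, ((true, a) : Lit) ∈ c) ∧ (∃ c ∈ T, ((false, a) : Lit) ∈ c)
  · obtain ⟨a, ⟨c₁, hc₁T, hac₁⟩, ⟨c₂, hc₂T, hac₂⟩⟩ := hboth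
    have hc₁2 : c₁.card = 2 := by
      have hle := h2 c₁ hc₁T
      have hne0 : c₁.card ≠ 0 := Finset.card_ne_zero_of_mem hac₁
      have hne1 : c₁.card ≠ 1 := fun h => hunit ⟨c₁, hc₁T, h⟩
      omega
    have hc₂2 : c₂.card = 2 := by
      have hle := h2 c₂ hc₂T
      have hne0 : c₂.card ≠ 0 := Finset.card_ne_zero_of_mem hac₂
      have hne1 : c₂.card ≠ 1 := fun h => hunit ⟨c₂, hc₂T, h⟩
      omega
    obtain ⟨l, hlne, hc₁⟩ := pair_extract hc₁2 hac₁
    obtain ⟨l', hl'ne, hc₂⟩ := pair_extract hc₂2 hac₂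
    have hl2a : l.2 ≠ a := other_atom_ne_pos (hok c₁ hc₁T) hac₁ (by rw [hc₁]; simp) hlne
    have hl'2a : l'.2 ≠ a := other_atom_ne_neg (hok c₂ hc₂T) hac₂ (by rw [hc₂]; simp) hl'ne
    have haT' : a ∈ thAtoms T := atom_mem hc₁T hac₁
    have hlT : l.2 ∈ thAtoms T := atom_mem hc₁T (by rw [hc₁]; simp)
    have hl'T : l'.2 ∈ thAtoms T := atom_mem hc₂T (by rw [hc₂]; simp)
    have hn2 : 2 ≤ n := by
      have hsub2 : ({a, l.2} : Finset ℕ) ⊆ thAtoms T := by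
        intro x hx
        rcases Finset.mem_insert.mp hx with rfl | hx
        · exact haT'
        · rw [Finset.mem_singleton] at hx; subst hx; exact hlT
      calc 2 = ({a, l.2} : Finset ℕ).card := (Finset.card_pair (Ne.symm hl2a)).symm
        _ ≤ (thAtoms T).card := Finset.card_le_card hsub2
        _ = n := hn
    have hsubU : {M : Finset ℕ | isMinModel M T} ⊆
        {M : Finset ℕ | isMinModel M T ∧ pat [(a, false), (l.2, l.1)] M} ∪
        {M : Finset ℕ | isMinModel M T ∧ pat [(a, true), (l'.2, l'.1)] M} := by
      intro M hM
      by_cases haM : a ∈ M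
      · refine Set.mem_union_right _ ⟨hM, pat_cons (by simpa using haM) (pat_cons ?_ (pat_nil M))⟩
        exact satLit_iff.mp (forced_other hc₂T hc₂ hM.1 (by simp [satLit, haM]))
      · refine Set.mem_union_left _ ⟨hM, pat_cons (by simpa using haM) (pat_cons ?_ (pat_nil M))⟩
        exact satLit_iff.mp (forced_other hc₁T hc₁ hM.1 (by simp [satLit, haM]))
    have hA1 := pattern_master IH hok h2 hn [(a, false), (l.2, l.1)] (by simp)
      (by simp [Ne.symm hl2a])
      (by intro p hp
          rcases List.mem_cons.mp hp with rfl | hp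
          · exact haT'
          rcases List.mem_cons.mp hp with rfl | hp
          · exact hlT
          · exact absurd hp List.not_mem_nil)
    have hA2 := pattern_master IH hok h2 hn [(a, true), (l'.2, l'.1)] (by simp)
      (by simp [Ne.symm hl'2a])
      (by intro p hp
          rcases List.mem_cons.mp hp with rfl | hp
          · exact haT'
          rcases List.mem_cons.mp hp with rfl | hp
          · exact hl'T
          · exact absurd hp List.not_mem_nil)
    have hsplit := ncard_split2 hsubU ((minM_finite T).subset (fun M hM => hM.1))
      ((minM_finite T).subset (fun M hM => hM.1))
    calc ({M : Finset ℕ | isMinModel M T}.ncard : ℝ)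
        ≤ ({M : Finset ℕ | isMinModel M T ∧ pat [(a, false), (l.2, l.1)] M}.ncard : ℝ) +
          ({M : Finset ℕ | isMinModel M T ∧ pat [(a, true), (l'.2, l'.1)] M}.ncard : ℝ) := by
          exact_mod_cast hsplit
      _ ≤ B (n - 2) + B (n - 2) := add_le_add hA1 hA2
      _ ≤ B n := R2 hn2
  -- monotone case
  push_neg at hpn
  have hMono : Mono T := by
    intro c hcT
    have hcard : c.card = 2 := by
      have hle := h2 c hcT
      have hne0 : c.card ≠ 0 := by
        intro h
        exact hemp (Finset.card_eq_zero.mp h ▸ hcT)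
      have hne1 : c.card ≠ 1 := fun h => hunit ⟨c, hcT, h⟩
      omega
    obtain ⟨u, w, huw, rfl⟩ := Finset.card_eq_two.mp hcard
    have hpos : ∀ l ∈ ({u, w} : Clause), l.1 = true := by
      intro l hl
      cases hl1 : l.1
      · obtain ⟨c', hc', hp'⟩ := hpn l.2 (atom_mem hcT hl)
        refine absurd ?_ hboth
        refine ⟨l.2, ⟨c', hc', hp'⟩, ⟨{u, w}, hcT, ?_⟩⟩
        have hleq : l = ((false, l.2) : Lit) := by
          obtain ⟨b, y⟩ := l; simp only at hl1; subst hl1; rfl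
        rwa [← hleq]
      · rfl
    obtain ⟨u1, u2⟩ := u; obtain ⟨w1, w2⟩ := w
    have hu := hpos (u1, u2) (by simp)
    have hw := hpos (w1, w2) (by simp)
    simp only at hu hw; subst hu; subst hw
    exact ⟨u2, w2, fun h => huw (by rw [h]), rfl⟩
  have hdeg : ∀ a ∈ thAtoms T, (nbr T a).Nonempty := fun a ha => nbr_nonempty hMono ha
  by_cases h3 : ∃ a ∈ thAtoms T, 3 ≤ (nbr T a).card
  · obtain ⟨a, haT, h3a⟩ := h3
    obtain ⟨s, hs, hscard⟩ := Finset.exists_subset_card_eq h3a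
    obtain ⟨b₁, b₂, b₃, h12, h13, h23, rfl⟩ := Finset.card_eq_three.mp hscard
    have hb₁ : b₁ ∈ nbr T a := hs (by simp)
    have hb₂ : b₂ ∈ nbr T a := hs (by simp)
    have hb₃ : b₃ ∈ nbr T a := hs (by simp)
    obtain ⟨hb₁a, hcl₁⟩ := (mem_nbr hMono).mp hb₁
    obtain ⟨hb₂a, hcl₂⟩ := (mem_nbr hMono).mp hb₂
    obtain ⟨hb₃a, hcl₃⟩ := (mem_nbr hMono).mp hb₃
    have hb₁T : b₁ ∈ thAtoms T := atom_mem hcl₁ (by simp : ((true, b₁) : Lit) ∈ _)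
    have hb₂T : b₂ ∈ thAtoms T := atom_mem hcl₂ (by simp : ((true, b₂) : Lit) ∈ _)
    have hb₃T : b₃ ∈ thAtoms T := atom_mem hcl₃ (by simp : ((true, b₃) : Lit) ∈ _)
    have hn4 : 4 ≤ n := by
      have hsub4 : ({a, b₁, b₂, b₃} : Finset ℕ) ⊆ thAtoms T := by
        intro x hx
        simp only [Finset.mem_insert, Finset.mem_singleton] at hx
        rcases hx with rfl | rfl | rfl | rfl
        exacts [haT, hb₁T, hb₂T, hb₃T]
      have hcard4 : ({a, b₁, b₂, b₃} : Finset ℕ).card = 4 := by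
        rw [Finset.card_insert_of_notMem (by simp [Ne.symm hb₁a, Ne.symm hb₂a, Ne.symm hb₃a]),
          Finset.card_insert_of_notMem (by simp [h12, h13]),
          Finset.card_insert_of_notMem (by simp [h23]), Finset.card_singleton]
      calc 4 = ({a, b₁, b₂, b₃} : Finset ℕ).card := hcard4.symm
        _ ≤ (thAtoms T).card := Finset.card_le_card hsub4
        _ = n := hn
    have hsubU : {M : Finset ℕ | isMinModel M T} ⊆
        {M : Finset ℕ | isMinModel M T ∧ pat [(a, true)] M} ∪
        {M : Finset ℕ | isMinModel M T ∧
          pat [(a, false), (b₁, true), (b₂, true), (b₃, true)] M} := by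
      intro M hM
      by_cases haM : a ∈ M
      · exact Set.mem_union_left _ ⟨hM, pat_cons (by simpa using haM) (pat_nil M)⟩
      · refine Set.mem_union_right _ ⟨hM, pat_cons (by simpa using haM)
          (pat_cons (by simpa using force_pos hcl₁ hM.1 haM)
          (pat_cons (by simpa using force_pos hcl₂ hM.1 haM)
          (pat_cons (by simpa using force_pos hcl₃ hM.1 haM) (pat_nil M))))⟩
    have hA1 := pattern_master IH hok h2 hn [(a, true)] (by simp) (by simp)
      (by intro p hp
          rcases List.mem_cons.mp hp with rfl | hp
          · exact haT
          · exact absurd hp List.not_mem_nil)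
    have hA2 := pattern_master IH hok h2 hn [(a, false), (b₁, true), (b₂, true), (b₃, true)]
      (by simp) (by simp [Ne.symm hb₁a, Ne.symm hb₂a, Ne.symm hb₃a, h12, h13, h23])
      (by intro p hp
          rcases List.mem_cons.mp hp with rfl | hp
          · exact haT
          rcases List.mem_cons.mp hp with rfl | hp
          · exact hb₁T
          rcases List.mem_cons.mp hp with rfl | hp
          · exact hb₂T
          rcases List.mem_cons.mp hp with rfl | hp
          · exact hb₃T
          · exact absurd hp List.not_mem_nil)
    have hsplit := ncard_split2 hsubU ((minM_finite T).subset (fun M hM => hM.1))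
      ((minM_finite T).subset (fun M hM => hM.1))
    calc ({M : Finset ℕ | isMinModel M T}.ncard : ℝ)
        ≤ ({M : Finset ℕ | isMinModel M T ∧ pat [(a, true)] M}.ncard : ℝ) +
          ({M : Finset ℕ | isMinModel M T ∧
            pat [(a, false), (b₁, true), (b₂, true), (b₃, true)] M}.ncard : ℝ) := by
          exact_mod_cast hsplit
      _ ≤ B (n - 1) + B (n - 4) := add_le_add hA1 hA2
      _ ≤ B n := R14 hn4
  by_cases h1 : ∃ a ∈ thAtoms T, (nbr T a).card = 1
  · obtain ⟨a, haT, h1a⟩ := h1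
    obtain ⟨b, hnb⟩ := Finset.card_eq_one.mp h1a
    have hb : b ∈ nbr T a := by rw [hnb]; simp
    obtain ⟨hba, hcl⟩ := (mem_nbr hMono).mp hb
    have hbT : b ∈ thAtoms T := atom_mem hcl (by simp : ((true, b) : Lit) ∈ _)
    have hn2 : 2 ≤ n := by
      have hsub2 : ({a, b} : Finset ℕ) ⊆ thAtoms T := by
        intro x hx
        rcases Finset.mem_insert.mp hx with rfl | hx
        · exact haT
        · rw [Finset.mem_singleton] at hx; subst hx; exact hbT
      calc 2 = ({a, b} : Finset ℕ).card := (Finset.card_pair (Ne.symm hba)).symm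
        _ ≤ (thAtoms T).card := Finset.card_le_card hsub2
        _ = n := hn
    have hsubU : {M : Finset ℕ | isMinModel M T} ⊆
        {M : Finset ℕ | isMinModel M T ∧ pat [(a, false), (b, true)] M} ∪
        {M : Finset ℕ | isMinModel M T ∧ pat [(a, true), (b, false)] M} := by
      intro M hM
      by_cases haM : a ∈ M
      · obtain ⟨w, hw, hwM⟩ := witness_nbr hMono hM haM
        rw [hnb, Finset.mem_singleton] at hw
        subst hw
        exact Set.mem_union_right _ ⟨hM, pat_cons (by simpa using haM)
          (pat_cons (by simpa using hwM) (pat_nil M))⟩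
      · exact Set.mem_union_left _ ⟨hM, pat_cons (by simpa using haM)
          (pat_cons (by simpa using force_pos hcl hM.1 haM) (pat_nil M))⟩
    have hA1 := pattern_master IH hok h2 hn [(a, false), (b, true)] (by simp)
      (by simp [Ne.symm hba])
      (by intro p hp
          rcases List.mem_cons.mp hp with rfl | hp
          · exact haT
          rcases List.mem_cons.mp hp with rfl | hp
          · exact hbT
          · exact absurd hp List.not_mem_nil)
    have hA2 := pattern_master IH hok h2 hn [(a, true), (b, false)] (by simp)
      (by simp [Ne.symm hba])
      (by intro p hp
          rcases List.mem_cons.mp hp with rfl | hp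
          · exact haT
          rcases List.mem_cons.mp hp with rfl | hp
          · exact hbT
          · exact absurd hp List.not_mem_nil)
    have hsplit := ncard_split2 hsubU ((minM_finite T).subset (fun M hM => hM.1))
      ((minM_finite T).subset (fun M hM => hM.1))
    calc ({M : Finset ℕ | isMinModel M T}.ncard : ℝ)
        ≤ ({M : Finset ℕ | isMinModel M T ∧ pat [(a, false), (b, true)] M}.ncard : ℝ) +
          ({M : Finset ℕ | isMinModel M T ∧ pat [(a, true), (b, false)] M}.ncard : ℝ) := by
          exact_mod_cast hsplit
      _ ≤ B (n - 2) + B (n - 2) := add_le_add hA1 hA2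
      _ ≤ B n := R2 hn2
  have hdeg2 : ∀ a ∈ thAtoms T, (nbr T a).card = 2 := by
    push_neg at h3 h1
    intro a ha
    have h3' := h3 a ha
    have h1' := h1 a ha
    have hp := Finset.card_pos.mpr (hdeg a ha)
    omega
  obtain ⟨a, haT⟩ := Finset.card_pos.mp (show 0 < (thAtoms T).card by omega)
  obtain ⟨b, c, hbc, hnbr⟩ := Finset.card_eq_two.mp (hdeg2 a haT)
  have hb : b ∈ nbr T a := by rw [hnbr]; simp
  have hc : c ∈ nbr T a := by rw [hnbr]; simp
  obtain ⟨hba, hcab⟩ := (mem_nbr hMono).mp hb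
  obtain ⟨hca, hcac⟩ := (mem_nbr hMono).mp hc
  have hbT : b ∈ thAtoms T := atom_mem hcab (by simp : ((true, b) : Lit) ∈ _)
  have hcT : c ∈ thAtoms T := atom_mem hcac (by simp : ((true, c) : Lit) ∈ _)
  by_cases hadj : ({((true, b) : Lit), ((true, c) : Lit)} : Clause) ∈ T
  · -- triangle case
    have hn3 : 3 ≤ n := by
      have hsub3 : ({a, b, c} : Finset ℕ) ⊆ thAtoms T := by
        intro x hx
        simp only [Finset.mem_insert, Finset.mem_singleton] at hx
        rcases hx with rfl | rfl | rfl
        exacts [haT, hbT, hcT]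
      have hcard3 : ({a, b, c} : Finset ℕ).card = 3 := by
        rw [Finset.card_insert_of_notMem (by simp [Ne.symm hba, Ne.symm hca]),
          Finset.card_pair hbc]
      calc 3 = ({a, b, c} : Finset ℕ).card := hcard3.symm
        _ ≤ (thAtoms T).card := Finset.card_le_card hsub3
        _ = n := hn
    have hsubU : {M : Finset ℕ | isMinModel M T} ⊆
        {M : Finset ℕ | isMinModel M T ∧ pat [(a, false), (b, true), (c, true)] M} ∪
        {M : Finset ℕ | isMinModel M T ∧ pat [(a, true), (b, false), (c, true)] M} ∪
        {M : Finset ℕ | isMinModel M T ∧ pat [(a, true), (b, true), (c, false)] M} := by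
      intro M hM
      by_cases haM : a ∈ M
      · by_cases hbM : b ∈ M
        · have hcM : c ∉ M := by
            obtain ⟨w, hw, hwM⟩ := witness_nbr hMono hM haM
            rw [hnbr] at hw
            rcases Finset.mem_insert.mp hw with rfl | hw
            · exact absurd hbM hwM
            · rw [Finset.mem_singleton] at hw; subst hw; exact hwM
          exact Set.mem_union_right _ ⟨hM, pat_cons (by simpa using haM)
            (pat_cons (by simpa using hbM) (pat_cons (by simpa using hcM) (pat_nil M)))⟩
        · exact Set.mem_union_left _ (Set.mem_union_right _ ⟨hM, pat_cons (by simpa using haM)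
            (pat_cons (by simpa using hbM)
            (pat_cons (by simpa using force_pos hadj hM.1 hbM) (pat_nil M)))⟩)
      · exact Set.mem_union_left _ (Set.mem_union_left _ ⟨hM, pat_cons (by simpa using haM)
          (pat_cons (by simpa using force_pos hcab hM.1 haM)
          (pat_cons (by simpa using force_pos hcac hM.1 haM) (pat_nil M)))⟩)
    have hA2 := pattern_master IH hok h2 hn [(a, true), (b, false), (c, true)] (by simp)
      (by simp [Ne.symm hba, Ne.symm hca, hbc])
      (by intro p hp
          rcases List.mem_cons.mp hp with rfl | hp
          · exact haT
          rcases List.mem_cons.mp hp with rfl | hp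
          · exact hbT
          rcases List.mem_cons.mp hp with rfl | hp
          · exact hcT
          · exact absurd hp List.not_mem_nil)
    have hA1 := pattern_master IH hok h2 hn [(a, false), (b, true), (c, true)] (by simp)
      (by simp [Ne.symm hba, Ne.symm hca, hbc])
      (by intro p hp
          rcases List.mem_cons.mp hp with rfl | hp
          · exact haT
          rcases List.mem_cons.mp hp with rfl | hp
          · exact hbT
          rcases List.mem_cons.mp hp with rfl | hp
          · exact hcT
          · exact absurd hp List.not_mem_nil)
    have hA3 := pattern_master IH hok h2 hn [(a, true), (b, true), (c, false)] (by simp)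
      (by simp [Ne.symm hba, Ne.symm hca, hbc])
      (by intro p hp
          rcases List.mem_cons.mp hp with rfl | hp
          · exact haT
          rcases List.mem_cons.mp hp with rfl | hp
          · exact hbT
          rcases List.mem_cons.mp hp with rfl | hp
          · exact hcT
          · exact absurd hp List.not_mem_nil)
    have hsplit := ncard_split3 hsubU ((minM_finite T).subset (fun M hM => hM.1))
      ((minM_finite T).subset (fun M hM => hM.1))
      ((minM_finite T).subset (fun M hM => hM.1))
    calc ({M : Finset ℕ | isMinModel M T}.ncard : ℝ)
        ≤ ({M : Finset ℕ | isMinModel M T ∧ pat [(a, false), (b, true), (c, true)] M}.ncard : ℝ) +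
          ({M : Finset ℕ | isMinModel M T ∧ pat [(a, true), (b, false), (c, true)] M}.ncard : ℝ) +
          ({M : Finset ℕ | isMinModel M T ∧ pat [(a, true), (b, true), (c, false)] M}.ncard : ℝ) := by
          exact_mod_cast hsplit
      _ ≤ B (n - 3) + B (n - 3) + B (n - 3) := add_le_add (add_le_add hA1 hA2) hA3
      _ ≤ B n := R3 hn3
  · -- non-adjacent case
    have hn3 : 3 ≤ n := by
      have hsub3 : ({a, b, c} : Finset ℕ) ⊆ thAtoms T := by
        intro x hx
        simp only [Finset.mem_insert, Finset.mem_singleton] at hx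
        rcases hx with rfl | rfl | rfl
        exacts [haT, hbT, hcT]
      have hcard3 : ({a, b, c} : Finset ℕ).card = 3 := by
        rw [Finset.card_insert_of_notMem (by simp [Ne.symm hba, Ne.symm hca]),
          Finset.card_pair hbc]
      calc 3 = ({a, b, c} : Finset ℕ).card := hcard3.symm
        _ ≤ (thAtoms T).card := Finset.card_le_card hsub3
        _ = n := hn
    have haInb : a ∈ nbr T b := (mem_nbr hMono).mpr ⟨Ne.symm hba,
      by rw [Finset.pair_comm]; exact hcab⟩
    have hcardb := hdeg2 b hbT
    have hdex : ((nbr T b).erase a).Nonempty := by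
      rw [← Finset.card_pos, Finset.card_erase_of_mem haInb, hcardb]
      norm_num
    obtain ⟨d, hd⟩ := hdex
    obtain ⟨hda, hdnb⟩ := Finset.mem_erase.mp hd
    obtain ⟨hdb, hcbd⟩ := (mem_nbr hMono).mp hdnb
    have hdc : d ≠ c := by
      intro h
      subst h
      exact hadj hcbd
    have hdT : d ∈ thAtoms T := atom_mem hcbd (by simp : ((true, d) : Lit) ∈ _)
    have hsubU : {M : Finset ℕ | isMinModel M T} ⊆
        {M : Finset ℕ | isMinModel M T ∧ pat [(a, false), (b, true), (c, true)] M} ∪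
        {M : Finset ℕ | isMinModel M T ∧ pat [(a, true), (b, false), (d, true)] M} ∪
        {M : Finset ℕ | isMinModel M T ∧ pat [(a, true), (b, true), (c, false)] M} := by
      intro M hM
      by_cases haM : a ∈ M
      · by_cases hbM : b ∈ M
        · have hcM : c ∉ M := by
            obtain ⟨w, hw, hwM⟩ := witness_nbr hMono hM haM
            rw [hnbr] at hw
            rcases Finset.mem_insert.mp hw with rfl | hw
            · exact absurd hbM hwM
            · rw [Finset.mem_singleton] at hw; subst hw; exact hwM
          exact Set.mem_union_right _ ⟨hM, pat_cons (by simpa using haM)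
            (pat_cons (by simpa using hbM) (pat_cons (by simpa using hcM) (pat_nil M)))⟩
        · exact Set.mem_union_left _ (Set.mem_union_right _ ⟨hM, pat_cons (by simpa using haM)
            (pat_cons (by simpa using hbM)
            (pat_cons (by simpa using force_pos hcbd hM.1 hbM) (pat_nil M)))⟩)
      · exact Set.mem_union_left _ (Set.mem_union_left _ ⟨hM, pat_cons (by simpa using haM)
          (pat_cons (by simpa using force_pos hcab hM.1 haM)
          (pat_cons (by simpa using force_pos hcac hM.1 haM) (pat_nil M)))⟩)
    have hA2 := pattern_master IH hok h2 hn [(a, true), (b, false), (d, true)] (by simp)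
      (by simp [Ne.symm hba, Ne.symm hda, Ne.symm hdb])
      (by intro p hp
          rcases List.mem_cons.mp hp with rfl | hp
          · exact haT
          rcases List.mem_cons.mp hp with rfl | hp
          · exact hbT
          rcases List.mem_cons.mp hp with rfl | hp
          · exact hdT
          · exact absurd hp List.not_mem_nil)
    have hA1 := pattern_master IH hok h2 hn [(a, false), (b, true), (c, true)] (by simp)
      (by simp [Ne.symm hba, Ne.symm hca, hbc])
      (by intro p hp
          rcases List.mem_cons.mp hp with rfl | hp
          · exact haT
          rcases List.mem_cons.mp hp with rfl | hp
          · exact hbT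
          rcases List.mem_cons.mp hp with rfl | hp
          · exact hcT
          · exact absurd hp List.not_mem_nil)
    have hA3 := pattern_master IH hok h2 hn [(a, true), (b, true), (c, false)] (by simp)
      (by simp [Ne.symm hba, Ne.symm hca, hbc])
      (by intro p hp
          rcases List.mem_cons.mp hp with rfl | hp
          · exact haT
          rcases List.mem_cons.mp hp with rfl | hp
          · exact hbT
          rcases List.mem_cons.mp hp with rfl | hp
          · exact hcT
          · exact absurd hp List.not_mem_nil)
    have hsplit := ncard_split3 hsubU ((minM_finite T).subset (fun M hM => hM.1))
      ((minM_finite T).subset (fun M hM => hM.1))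
      ((minM_finite T).subset (fun M hM => hM.1))
    calc ({M : Finset ℕ | isMinModel M T}.ncard : ℝ)
        ≤ ({M : Finset ℕ | isMinModel M T ∧ pat [(a, false), (b, true), (c, true)] M}.ncard : ℝ) +
          ({M : Finset ℕ | isMinModel M T ∧ pat [(a, true), (b, false), (d, true)] M}.ncard : ℝ) +
          ({M : Finset ℕ | isMinModel M T ∧ pat [(a, true), (b, true), (c, false)] M}.ncard : ℝ) := by
          exact_mod_cast hsplit
      _ ≤ B (n - 3) + B (n - 3) + B (n - 3) := add_le_add (add_le_add hA1 hA2) hA3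
      _ ≤ B n := R3 hn3

/-- Every 2-CNF theory `T` with `n = |At(T)|` atoms has at most `3^(n/3)` minimal models. -/
theorem two_cnf_minimal_models_bound (T : CTheory)
    (hok : ∀ c ∈ T, Clause.ok c) (h2 : ∀ c ∈ T, c.card ≤ 2) :
    (({M : Finset ℕ | isMinModel M T}.ncard : ℝ)) ≤
      (3 : ℝ) ^ (((thAtoms T).card : ℝ) / 3) := by
  simpa [B] using main_aux ((thAtoms T).card) T hok h2 rfl
end

section
/- Let t ≥ 2 be an integer and let α_t be the unique real number in the interval (1, 2) satisfying 1 + α_t + α_t² + … + α_t^(t−1) = α_t^t. Then α_t ≤ 2 − 1/2^t, and every t-CNF theory T with n = |At(T)| atoms has at most α_t^n minimal models. -/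
open Classical

noncomputable def mmF (T : CTheory) : Finset (Finset ℕ) :=
  (thAtoms T).powerset.filter (fun M => isMinModel M T)

lemma mem_mmF {T : CTheory} {M : Finset ℕ} : M ∈ mmF T ↔ isMinModel M T := by
  simp only [mmF, Finset.mem_filter, Finset.mem_powerset]
  exact ⟨fun h => h.2, fun h => ⟨h.2.1, h⟩⟩

noncomputable def reduceTh (T : CTheory) (p : ℕ) (S : Finset ℕ) : CTheory :=
  (T.filter (fun c => ((true,p):Lit) ∉ c ∧ ∀ a ∈ S, ((false,a):Lit) ∉ c)).image
    (fun c => c.filter (fun l => l.2 ≠ p ∧ l.2 ∉ S))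

lemma reduce_model {T : CTheory} {p : ℕ} {S : Finset ℕ} {M' : Finset ℕ}
    (hpS : p ∉ S) (hdp : p ∉ M') (hdS : ∀ x ∈ S, x ∉ M') :
    isModel (insert p M') T ↔ isModel M' (reduceTh T p S) := by
  constructor
  · intro h c' hc'
    simp only [reduceTh, Finset.mem_image, Finset.mem_filter] at hc'
    obtain ⟨c, ⟨hcT, hcp, hcS⟩, rfl⟩ := hc'
    obtain ⟨l, hl, hsat⟩ := h c hcT
    have hl2p : l.2 ≠ p := by
      intro he
      cases hb : l.1 with
      | true =>
        apply hcp
        have : l = ((true, p) : Lit) := Prod.ext hb he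
        rwa [← this]
      | false =>
        rw [satLit, hb] at hsat
        simp only [if_neg Bool.false_ne_true] at hsat
        exact hsat (he ▸ Finset.mem_insert_self p M')
    have hl2S : l.2 ∉ S := by
      intro he
      cases hb : l.1 with
      | true =>
        rw [satLit, hb, if_pos rfl] at hsat
        rcases Finset.mem_insert.mp hsat with h1 | h1
        · exact hpS (h1 ▸ he)
        · exact hdS _ he h1
      | false =>
        exact hcS _ he (by have : l = ((false, l.2) : Lit) := Prod.ext hb rfl; rwa [← this])
    refine ⟨l, Finset.mem_filter.mpr ⟨hl, hl2p, hl2S⟩, ?_⟩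
    cases hb : l.1 with
    | true =>
      rw [satLit, hb, if_pos rfl] at hsat ⊢
      rcases Finset.mem_insert.mp hsat with h1 | h1
      · exact absurd h1 hl2p
      · exact h1
    | false =>
      rw [satLit, hb] at hsat ⊢
      simp only [if_neg Bool.false_ne_true] at hsat ⊢
      exact fun hm => hsat (Finset.mem_insert_of_mem hm)
  · intro h c hcT
    by_cases h1 : ((true,p):Lit) ∈ c
    · exact ⟨_, h1, by rw [satLit]; simp⟩
    by_cases h2 : ∃ a ∈ S, ((false,a):Lit) ∈ c
    · obtain ⟨a, haS, hac⟩ := h2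
      refine ⟨_, hac, ?_⟩
      rw [satLit]
      simp only [if_neg Bool.false_ne_true]
      intro hm
      rcases Finset.mem_insert.mp hm with h3 | h3
      · exact hpS (h3 ▸ haS)
      · exact hdS _ haS h3
    push_neg at h2
    have hc' : c.filter (fun l => l.2 ≠ p ∧ l.2 ∉ S) ∈ reduceTh T p S := by
      simp only [reduceTh, Finset.mem_image, Finset.mem_filter]
      exact ⟨c, ⟨hcT, h1, h2⟩, rfl⟩
    obtain ⟨l, hl, hsat⟩ := h _ hc'
    rw [Finset.mem_filter] at hl
    obtain ⟨hlc, hlp, hlS⟩ := hl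
    refine ⟨l, hlc, ?_⟩
    cases hb : l.1 with
    | true =>
      rw [satLit, hb, if_pos rfl] at hsat ⊢
      exact Finset.mem_insert_of_mem hsat
    | false =>
      rw [satLit, hb] at hsat ⊢
      simp only [if_neg Bool.false_ne_true] at hsat ⊢
      intro hm
      rcases Finset.mem_insert.mp hm with h3 | h3
      · exact hlp h3
      · exact hsat h3

lemma reduce_atoms {T : CTheory} {p : ℕ} {S : Finset ℕ} :
    thAtoms (reduceTh T p S) ⊆ (thAtoms T) \ (insert p S) := by
  intro a ha
  rw [thAtoms, Finset.mem_sup] at ha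
  obtain ⟨c', hc', hac'⟩ := ha
  simp only [reduceTh, Finset.mem_image, Finset.mem_filter] at hc'
  obtain ⟨c, ⟨hcT, _, _⟩, rfl⟩ := hc'
  rw [clauseAtoms, Finset.mem_image] at hac'
  obtain ⟨l, hl, rfl⟩ := hac'
  rw [Finset.mem_filter] at hl
  obtain ⟨hlc, hlp, hlS⟩ := hl
  rw [Finset.mem_sdiff, Finset.mem_insert]
  refine ⟨?_, by tauto⟩
  rw [thAtoms, Finset.mem_sup]
  exact ⟨c, hcT, Finset.mem_image_of_mem _ hlc⟩

lemma reduce_minModel {T : CTheory} {p : ℕ} {S : Finset ℕ} {M : Finset ℕ}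
    (hmin : isMinModel M T) (hp : p ∈ M) (hpS : p ∉ S) (hS : ∀ x ∈ S, x ∉ M) :
    isMinModel (M.erase p) (reduceTh T p S) := by
  have hins : insert p (M.erase p) = M := Finset.insert_erase hp
  have hdS : ∀ x ∈ S, x ∉ M.erase p := fun x hx hm => hS x hx (Finset.mem_of_mem_erase hm)
  refine ⟨?_, ?_, ?_⟩
  · rw [← reduce_model hpS (Finset.notMem_erase p M) hdS, hins]
    exact hmin.1
  · intro a ha
    have hap : a ≠ p := Finset.ne_of_mem_erase ha
    have haM : a ∈ M := Finset.mem_of_mem_erase ha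
    have hss : M.erase a ⊂ M := Finset.erase_ssubset haM
    have hnm := hmin.2.2 _ hss
    rw [isModel] at hnm
    push_neg at hnm
    obtain ⟨c, hcT, hcall⟩ := hnm
    obtain ⟨l, hlc, hsat⟩ := hmin.1 c hcT
    have hla : l = ((true, a) : Lit) := by
      rcases l with ⟨b, x⟩
      cases b
      · exfalso
        apply hcall _ hlc
        simp only [satLit] at hsat ⊢
        simp only [if_neg Bool.false_ne_true] at hsat ⊢
        exact fun hm => hsat (Finset.mem_of_mem_erase hm)
      · simp only [satLit, if_pos rfl] at hsat
        by_cases he : x = a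
        · rw [he]
        · exfalso
          apply hcall _ hlc
          simp only [satLit, if_pos rfl]
          exact Finset.mem_erase.mpr ⟨he, hsat⟩
    have hcp : ((true,p):Lit) ∉ c := by
      intro hmem
      apply hcall _ hmem
      have : satLit (M.erase a) ((true,p):Lit) ↔ p ∈ M.erase a := by simp [satLit]
      rw [this]
      exact Finset.mem_erase.mpr ⟨fun h => hap h.symm, hp⟩
    have hcS : ∀ b ∈ S, ((false,b):Lit) ∉ c := by
      intro b hbS hmem
      apply hcall _ hmem
      have : satLit (M.erase a) ((false,b):Lit) ↔ b ∉ M.erase a := by simp [satLit]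
      rw [this]
      exact fun hm => hS b hbS (Finset.mem_of_mem_erase hm)
    have haS : a ∉ S := fun h => hS a h haM
    rw [thAtoms, Finset.mem_sup]
    refine ⟨c.filter (fun l => l.2 ≠ p ∧ l.2 ∉ S), ?_, ?_⟩
    · simp only [reduceTh, Finset.mem_image, Finset.mem_filter]
      exact ⟨c, ⟨hcT, hcp, hcS⟩, rfl⟩
    · rw [clauseAtoms, Finset.mem_image]
      exact ⟨((true,a):Lit), Finset.mem_filter.mpr ⟨hla ▸ hlc, hap, haS⟩, rfl⟩
  · intro M'' hss hmod
    have hpM'' : p ∉ M'' := fun h => Finset.notMem_erase p M (hss.subset h)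
    have hdS'' : ∀ x ∈ S, x ∉ M'' := fun x hx hm => hdS x hx (hss.subset hm)
    have hmod' : isModel (insert p M'') T := (reduce_model hpS hpM'' hdS'').mpr hmod
    apply hmin.2.2 (insert p M'') _ hmod'
    rw [Finset.ssubset_iff_of_subset]
    · obtain ⟨y, hy1, hy2⟩ := Finset.exists_of_ssubset hss
      exact ⟨y, Finset.mem_of_mem_erase hy1,
        by simp only [Finset.mem_insert]; push_neg;
           exact ⟨Finset.ne_of_mem_erase hy1, hy2⟩⟩
    · rw [← hins]
      exact Finset.insert_subset_insert p hss.subset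

lemma count_bound (t : ℕ) (α : ℝ) (hα1 : 1 < α)
    (heq : ∑ i ∈ Finset.range t, α ^ i = α ^ t) :
    ∀ n : ℕ, ∀ T : CTheory, (∀ c ∈ T, c.card ≤ t) → (thAtoms T).card = n →
      ((mmF T).card : ℝ) ≤ α ^ n := by
  have hα0 : (0:ℝ) < α := lt_trans one_pos hα1
  intro n
  induction n using Nat.strong_induction_on with
  | _ n IH =>
  intro T hw hcard
  by_cases hpos : ∃ c ∈ T, ∀ l ∈ c, l.1 = true
  · obtain ⟨c₀, hc₀T, hc₀pos⟩ := hpos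
    by_cases hem : c₀ = ∅
    · have hmme : mmF T = ∅ := by
        rw [Finset.eq_empty_iff_forall_notMem]
        intro M hM
        obtain ⟨l, hl, _⟩ := (mem_mmF.mp hM).1 c₀ hc₀T
        rw [hem] at hl
        exact absurd hl (Finset.notMem_empty l)
      rw [hmme]
      simp only [Finset.card_empty, Nat.cast_zero]
      positivity
    · -- branching case
      set l₀ := (clauseAtoms c₀).sort (· ≤ ·) with hl₀
      set k := l₀.length with hk
      have hnodup : l₀.Nodup := (clauseAtoms c₀).sort_nodup _
      have hmeml : ∀ x, x ∈ l₀ ↔ x ∈ clauseAtoms c₀ := fun x => Finset.mem_sort _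
      have hkcard : k = (clauseAtoms c₀).card := Finset.length_sort _
      set a : ℕ → ℕ := fun i => l₀.getD i 0 with ha
      have hget : ∀ i (h : i < k), a i = l₀[i] := fun i h => l₀.getD_eq_getElem 0 h
      have hainj : ∀ i j, i < k → j < k → a i = a j → i = j := by
        intro i j hi hj hij
        rw [hget i hi, hget j hj] at hij
        exact (List.Nodup.getElem_inj_iff hnodup).mp hij
      have hamem : ∀ i, i < k → a i ∈ clauseAtoms c₀ := by
        intro i hi
        rw [← hmeml, hget i hi]
        exact List.getElem_mem _
      have hatomsub : clauseAtoms c₀ ⊆ thAtoms T := by rw [thAtoms]; exact Finset.le_sup (f := clauseAtoms) hc₀T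
      set S : ℕ → Finset ℕ := fun i => (Finset.range i).image a with hSdef
      have hSmem : ∀ i x, x ∈ S i ↔ ∃ j < i, a j = x := by
        intro i x
        simp [hSdef]
      set B : ℕ → Finset (Finset ℕ) :=
        fun i => (mmF T).filter (fun M => a i ∈ M ∧ ∀ j < i, a j ∉ M) with hBdef
      have hkt : k ≤ t := by
        rw [hkcard]
        exact le_trans Finset.card_image_le (hw c₀ hc₀T)
      have hkn : k ≤ n := by
        rw [hkcard, ← hcard]
        exact Finset.card_le_card hatomsub
      have hcover : mmF T ⊆ (Finset.range k).biUnion B := by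
        intro M hM
        obtain ⟨lit, hlit, hsat⟩ := (mem_mmF.mp hM).1 c₀ hc₀T
        have hb : lit.1 = true := hc₀pos lit hlit
        have hsat' : lit.2 ∈ M := by
          rw [satLit, if_pos hb] at hsat
          exact hsat
        have hlitmem : lit.2 ∈ l₀ := (hmeml _).mpr (Finset.mem_image_of_mem _ hlit)
        obtain ⟨i0, hi0, hi0e⟩ := List.mem_iff_getElem.mp hlitmem
        have hP : ∃ i, i < k ∧ a i ∈ M := ⟨i0, hi0, by rw [hget i0 hi0, hi0e]; exact hsat'⟩
        have hspec := Nat.find_spec hP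
        rw [Finset.mem_biUnion]
        refine ⟨Nat.find hP, Finset.mem_range.mpr hspec.1,
          Finset.mem_filter.mpr ⟨hM, hspec.2, ?_⟩⟩
        intro j hj hjM
        exact Nat.find_min hP hj ⟨lt_trans hj hspec.1, hjM⟩
      have hbranch : ∀ i, i < k → ((B i).card : ℝ) ≤ α ^ (n - (i+1)) := by
        intro i hi
        have hpS : a i ∉ S i := by
          rw [hSmem]
          rintro ⟨j, hj, hje⟩
          exact absurd (hainj j i (lt_trans hj hi) hi hje) (Nat.ne_of_lt hj)
        have hmaps : ∀ M ∈ B i, M.erase (a i) ∈ mmF (reduceTh T (a i) (S i)) := by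
          intro M hM
          rw [hBdef, Finset.mem_filter] at hM
          obtain ⟨hMmm, hpM, hprev⟩ := hM
          rw [mem_mmF]
          apply reduce_minModel (mem_mmF.mp hMmm) hpM hpS
          intro x hx
          obtain ⟨j, hj, rfl⟩ := (hSmem i x).mp hx
          exact hprev j hj
        have hinj : (B i).card ≤ (mmF (reduceTh T (a i) (S i))).card := by
          apply Finset.card_le_card_of_injOn (fun M => M.erase (a i)) (fun M hM => hmaps M hM)
          intro M1 h1 M2 h2 he
          have hp1 : a i ∈ M1 := ((Finset.mem_filter.mp (Finset.mem_coe.mp h1)).2).1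
          have hp2 : a i ∈ M2 := ((Finset.mem_filter.mp (Finset.mem_coe.mp h2)).2).1
          rw [← Finset.insert_erase hp1, ← Finset.insert_erase hp2]
          simp only at he
          rw [he]
        have hins_sub : insert (a i) (S i) ⊆ thAtoms T := by
          intro x hx
          rcases Finset.mem_insert.mp hx with h1 | h1
          · exact hatomsub (h1 ▸ hamem i hi)
          · obtain ⟨j, hj, rfl⟩ := (hSmem i x).mp h1
            exact hatomsub (hamem j (lt_trans hj hi))
        have hcard_ins : (insert (a i) (S i)).card = i + 1 := by
          rw [Finset.card_insert_of_notMem hpS]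
          congr 1
          rw [hSdef]
          rw [Finset.card_image_of_injOn]
          · exact Finset.card_range i
          · intro x hx y hy hxy
            exact hainj x y (lt_trans (Finset.mem_range.mp hx) hi)
              (lt_trans (Finset.mem_range.mp hy) hi) hxy
        have hT1 : (thAtoms (reduceTh T (a i) (S i))).card ≤ n - (i+1) := by
          calc (thAtoms (reduceTh T (a i) (S i))).card
              ≤ (thAtoms T \ insert (a i) (S i)).card :=
                Finset.card_le_card reduce_atoms
            _ = n - (i+1) := by rw [Finset.card_sdiff_of_subset hins_sub, hcard_ins, hcard]
        have hT2 : (thAtoms (reduceTh T (a i) (S i))).card < n := by omega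
        have hwidth : ∀ c ∈ reduceTh T (a i) (S i), c.card ≤ t := by
          intro c hc
          simp only [reduceTh, Finset.mem_image, Finset.mem_filter] at hc
          obtain ⟨c', ⟨hc'T, _, _⟩, rfl⟩ := hc
          exact le_trans (Finset.card_filter_le _ _) (hw c' hc'T)
        have hIH := IH _ hT2 (reduceTh T (a i) (S i)) hwidth rfl
        calc ((B i).card : ℝ) ≤ ((mmF (reduceTh T (a i) (S i))).card : ℝ) := by
              exact_mod_cast hinj
          _ ≤ α ^ (thAtoms (reduceTh T (a i) (S i))).card := hIH
          _ ≤ α ^ (n - (i+1)) := pow_le_pow_right₀ hα1.le hT1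
      -- final summation
      have hterm : ∀ i ∈ Finset.range k, α ^ (n - (i+1)) = α ^ n * (1/α)^(i+1) := by
        intro i hi
        have hin : i + 1 ≤ n := le_trans (Finset.mem_range.mp hi) hkn
        rw [one_div, inv_pow, ← div_eq_mul_inv, eq_div_iff (pow_ne_zero _ hα0.ne'),
          ← pow_add]
        congr 1
        omega
      have hgeom : ∑ i ∈ Finset.range t, (1/α)^(i+1) = 1 := by
        have h1 : ∀ i ∈ Finset.range t, (1/α)^(t - 1 - i + 1) = α ^ i / α ^ t := by
          intro i hi
          have hi' : i < t := Finset.mem_range.mp hi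
          have h2 : t - 1 - i + 1 = t - i := by omega
          rw [h2, div_pow, one_pow, div_eq_div_iff (pow_ne_zero _ hα0.ne')
            (pow_ne_zero _ hα0.ne'), one_mul, ← pow_add]
          congr 1
          omega
        calc ∑ i ∈ Finset.range t, (1/α)^(i+1)
            = ∑ i ∈ Finset.range t, (1/α)^(t-1-i+1) :=
              (Finset.sum_range_reflect (fun i => (1/α)^(i+1)) t).symm
          _ = ∑ i ∈ Finset.range t, α ^ i / α ^ t := Finset.sum_congr rfl h1
          _ = (∑ i ∈ Finset.range t, α ^ i) / α ^ t := by rw [Finset.sum_div]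
          _ = 1 := by rw [heq, div_self (pow_ne_zero _ hα0.ne')]
      calc ((mmF T).card : ℝ)
          ≤ (((Finset.range k).biUnion B).card : ℝ) := by
            exact_mod_cast Finset.card_le_card hcover
        _ ≤ ((∑ i ∈ Finset.range k, (B i).card : ℕ) : ℝ) := by
            exact_mod_cast Finset.card_biUnion_le
        _ = ∑ i ∈ Finset.range k, ((B i).card : ℝ) := by push_cast; ring
        _ ≤ ∑ i ∈ Finset.range k, α ^ (n - (i+1)) :=
            Finset.sum_le_sum (fun i hi => hbranch i (Finset.mem_range.mp hi))
        _ = ∑ i ∈ Finset.range k, α ^ n * (1/α)^(i+1) := Finset.sum_congr rfl hterm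
        _ = α ^ n * ∑ i ∈ Finset.range k, (1/α)^(i+1) := by rw [Finset.mul_sum]
        _ ≤ α ^ n * ∑ i ∈ Finset.range t, (1/α)^(i+1) := by
            apply mul_le_mul_of_nonneg_left _ (by positivity)
            apply Finset.sum_le_sum_of_subset_of_nonneg
              (Finset.range_subset_range.mpr hkt)
            intro i _ _
            positivity
        _ = α ^ n := by rw [hgeom, mul_one]
  · -- every clause has a negative literal
    have hmod : isModel ∅ T := by
      intro c hc
      push_neg at hpos
      obtain ⟨l, hl, hfl⟩ := hpos c hc
      refine ⟨l, hl, ?_⟩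
      rw [satLit, if_neg hfl]
      exact Finset.notMem_empty _
    have hsub : mmF T ⊆ {∅} := by
      intro M hM
      rw [Finset.mem_singleton]
      by_contra hne
      exact (mem_mmF.mp hM).2.2 ∅
        (Finset.empty_ssubset.mpr (Finset.nonempty_iff_ne_empty.mpr hne)) hmod
    calc ((mmF T).card : ℝ)
        ≤ 1 := by exact_mod_cast le_trans (Finset.card_le_card hsub) (by simp)
      _ ≤ α ^ n := one_le_pow₀ hα1.le

/-- Let `t ≥ 2` and let `α` be the (unique) real in `(1,2)` with
`1 + α + α² + … + α^(t−1) = α^t`. Then `α ≤ 2 − 1/2^t`, and every `t`-CNF theory with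
`n = |At(T)|` atoms has at most `α^n` minimal models. -/
theorem t_cnf_minimal_models_bound (t : ℕ) (ht : 2 ≤ t) (α : ℝ)
    (hα1 : 1 < α) (hα2 : α < 2)
    (heq : ∑ i ∈ Finset.range t, α ^ i = α ^ t) :
    α ≤ 2 - 1 / 2 ^ t ∧
    ∀ T : CTheory, (∀ c ∈ T, Clause.ok c) → (∀ c ∈ T, c.card ≤ t) →
      (({M : Finset ℕ | isMinModel M T}.ncard : ℝ)) ≤ α ^ (thAtoms T).card := by
  have hα0 : (0:ℝ) < α := lt_trans one_pos hα1
  constructor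
  · have heq' := heq
    rw [geom_sum_eq (ne_of_gt hα1) t] at heq'
    have hne : α - 1 ≠ 0 := sub_ne_zero.mpr (ne_of_gt hα1)
    rw [div_eq_iff hne] at heq'
    have h2 : α ^ t * (2 - α) = 1 := by nlinarith [heq']
    have h3 : (0:ℝ) < α ^ t := by positivity
    have h4 : α ^ t ≤ 2 ^ t := pow_le_pow_left₀ hα0.le hα2.le t
    have h5 : 2 - α = 1 / α ^ t := by
      field_simp
      linarith [h2]
    have h6 : 1 / (2:ℝ)^t ≤ 1 / α ^ t := one_div_le_one_div_of_le h3 h4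
    linarith
  · intro T hok hw
    have hset : {M : Finset ℕ | isMinModel M T} = ↑(mmF T) := by
      ext M
      simp [mem_mmF]
    rw [hset, Set.ncard_coe_finset]
    exact count_bound t α hα1 heq _ T hw rfl
end

section
/- Let 𝒯 be a finite rooted tree, let N ≥ 0 and τ₀ ≥ 1 be real numbers, and let μ be a function assigning to each node of 𝒯 a nonnegative real number, with μ(root) ≤ N, such that for every internal node x of 𝒯, the sum over the children y of x of τ₀^(μ(y) − μ(x)) is at most 1. Then the number of leaves of 𝒯 is at most τ₀^N. -/
open Classical

private lemma leaf_bound_aux {V : Type*} [Fintype V] (root : V) (parent : V → V)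
    (hroot : parent root = root)
    (hreach : ∀ v : V, ∃ n : ℕ, parent^[n] v = root)
    (τ₀ : ℝ) (hτ : 1 ≤ τ₀)
    (μ : V → ℝ) (hμ : ∀ v : V, 0 ≤ μ v)
    (hsum : ∀ x : V, (∃ v : V, v ≠ root ∧ parent v = x) →
      ∑ y ∈ Finset.univ.filter (fun y : V => y ≠ root ∧ parent y = x),
        τ₀ ^ (μ y - μ x) ≤ 1) :
    ∀ x : V,
      ((Finset.univ.filter (fun w : V =>
          (¬ ∃ v : V, v ≠ root ∧ parent v = w) ∧ ∃ n : ℕ, parent^[n] w = x)).card : ℝ)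
        ≤ τ₀ ^ (μ x) := by
  have hpos : (0:ℝ) < τ₀ := lt_of_lt_of_le one_pos hτ
  have hiroot : ∀ n, parent^[n] root = root := fun n => Function.iterate_fixed hroot n
  have nocycle : ∀ y : V, y ≠ root → ∀ k, 0 < k → parent^[k] y ≠ y := by
    intro y hy k hk hcyc
    obtain ⟨m, hm⟩ := hreach y
    have hj : ∀ j, parent^[k*j] y = y := by
      intro j; induction j with
      | zero => simp
      | succ j ih => rw [Nat.mul_succ, Function.iterate_add_apply, hcyc, ih]
    have hkm : m ≤ k * m := Nat.le_mul_of_pos_left m hk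
    have hroot' : parent^[k*m] y = root := by
      have h1 : parent^[k*m] y = parent^[k*m - m] (parent^[m] y) := by
        rw [← Function.iterate_add_apply, Nat.sub_add_cancel hkm]
      rw [h1, hm, hiroot]
    exact hy ((hj m).symm.trans hroot')
  set below : V → Finset V := fun x =>
    Finset.univ.filter (fun w : V =>
      (¬ ∃ v : V, v ≠ root ∧ parent v = w) ∧ ∃ n : ℕ, parent^[n] w = x) with hbelow
  set desc : V → Finset V := fun x =>
    Finset.univ.filter (fun v : V => ∃ n : ℕ, 0 < n ∧ parent^[n] v = x) with hdesc
  -- a step from a node toward x produces a child of x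
  have step : ∀ (w x : V) (hE : ∃ n : ℕ, parent^[n] w = x), Nat.find hE ≠ 0 →
      ∃ y : V, (y ≠ root ∧ parent y = x) ∧ ∃ m : ℕ, parent^[m] w = y := by
    intro w x hE hne
    have hx : parent^[Nat.find hE] w = x := Nat.find_spec hE
    have hpos' : 0 < Nat.find hE := Nat.pos_of_ne_zero hne
    have hsucc : Nat.find hE - 1 + 1 = Nat.find hE := Nat.succ_pred_eq_of_pos hpos'
    have hpar : parent (parent^[Nat.find hE - 1] w) = x := by
      rw [← Function.iterate_succ_apply' parent (Nat.find hE - 1) w]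
      rwa [Nat.succ_eq_add_one, hsucc]
    refine ⟨parent^[Nat.find hE - 1] w, ⟨?_, hpar⟩, Nat.find hE - 1, rfl⟩
    intro hr
    have hx' : x = root := by rw [← hpar, hr, hroot]
    have hmem : parent^[Nat.find hE - 1] w = x := by rw [hr, hx']
    exact Nat.find_min hE (by omega) hmem
  suffices H : ∀ (n : ℕ) (x : V), (desc x).card = n → ((below x).card : ℝ) ≤ τ₀ ^ (μ x) by
    intro x; exact H _ x rfl
  intro n
  induction n using Nat.strong_induction_on with
  | _ n ih =>
    intro x hx
    by_cases hint : ∃ v : V, v ≠ root ∧ parent v = x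
    · -- internal node
      set children : Finset V :=
        Finset.univ.filter (fun y : V => y ≠ root ∧ parent y = x) with hchildren
      have cover : below x ⊆ children.biUnion (fun y => below y) := by
        intro w hw
        rw [hbelow, Finset.mem_filter] at hw
        obtain ⟨-, hleaf, hE⟩ := hw
        have hne : Nat.find hE ≠ 0 := by
          intro h0
          have := Nat.find_spec hE
          rw [h0] at this
          simp only [Function.iterate_zero, id_eq] at this
          exact hleaf (this ▸ hint)
        obtain ⟨y, hy, m, hm⟩ := step w x hE hne
        refine Finset.mem_biUnion.mpr ⟨y, ?_, ?_⟩
        · rw [hchildren, Finset.mem_filter]; exact ⟨Finset.mem_univ _, hy⟩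
        · rw [hbelow, Finset.mem_filter]; exact ⟨Finset.mem_univ _, hleaf, m, hm⟩
      have hcard : (below x).card ≤ ∑ y ∈ children, (below y).card :=
        le_trans (Finset.card_le_card cover) (Finset.card_biUnion_le)
      have ihchild : ∀ y ∈ children, ((below y).card : ℝ) ≤ τ₀ ^ (μ y) := by
        intro y hy
        rw [hchildren, Finset.mem_filter] at hy
        obtain ⟨-, hyr, hyp⟩ := hy
        have hsub : desc y ⊆ desc x := by
          intro v hv
          rw [hdesc, Finset.mem_filter] at hv ⊢
          obtain ⟨-, k, hk, hkv⟩ := hv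
          refine ⟨Finset.mem_univ _, k + 1, Nat.succ_pos _, ?_⟩
          rw [Function.iterate_succ_apply', hkv, hyp]
        have hyx : y ∈ desc x := by
          rw [hdesc, Finset.mem_filter]
          exact ⟨Finset.mem_univ _, 1, Nat.one_pos, by simp [hyp]⟩
        have hyy : y ∉ desc y := by
          rw [hdesc, Finset.mem_filter]
          rintro ⟨-, k, hk, hkv⟩
          exact nocycle y hyr k hk hkv
        have hlt : (desc y).card < n := by
          rw [← hx]
          exact Finset.card_lt_card ⟨hsub, fun h => hyy (h hyx)⟩
        exact ih _ hlt y rfl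
      have hterm : ∀ y : V, τ₀ ^ (μ y) = τ₀ ^ (μ x) * τ₀ ^ (μ y - μ x) := by
        intro y
        rw [← Real.rpow_add hpos]
        congr 1
        ring
      calc ((below x).card : ℝ) ≤ ∑ y ∈ children, ((below y).card : ℝ) := by
            exact_mod_cast hcard
        _ ≤ ∑ y ∈ children, τ₀ ^ (μ y) := Finset.sum_le_sum ihchild
        _ = τ₀ ^ (μ x) * ∑ y ∈ children, τ₀ ^ (μ y - μ x) := by
            rw [Finset.mul_sum]
            exact Finset.sum_congr rfl fun y _ => hterm y
        _ ≤ τ₀ ^ (μ x) * 1 :=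
            mul_le_mul_of_nonneg_left (hsum x hint) (Real.rpow_nonneg hpos.le _)
        _ = τ₀ ^ (μ x) := mul_one _
    · -- leaf node
      have hsub : below x ⊆ {x} := by
        intro w hw
        rw [hbelow, Finset.mem_filter] at hw
        obtain ⟨-, hleaf, hE⟩ := hw
        by_cases hne : Nat.find hE = 0
        · have := Nat.find_spec hE
          rw [hne] at this
          simp only [Function.iterate_zero, id_eq] at this
          simp [this]
        · obtain ⟨y, hy, -⟩ := step w x hE hne
          exact absurd ⟨y, hy⟩ hint
      have h1 : ((below x).card : ℝ) ≤ 1 := by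
        have := Finset.card_le_card hsub
        simp only [Finset.card_singleton] at this
        exact_mod_cast this
      calc ((below x).card : ℝ) ≤ 1 := h1
        _ = τ₀ ^ (0:ℝ) := (Real.rpow_zero τ₀).symm
        _ ≤ τ₀ ^ (μ x) := Real.rpow_le_rpow_of_exponent_le hτ (hμ x)

/-- Let `𝒯` be a finite rooted tree (nodes `V`, root, parent function), `N ≥ 0`, `τ₀ ≥ 1`, and
`μ` a nonnegative real-valued function on nodes with `μ(root) ≤ N` such that for every internal
node `x`, `∑_{y child of x} τ₀^(μ(y) − μ(x)) ≤ 1`. Then the number of leaves is at most `τ₀^N`. -/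
theorem leaf_bound_of_measure (V : Type*) [Fintype V] (root : V) (parent : V → V)
    (hroot : parent root = root)
    (hreach : ∀ v : V, ∃ n : ℕ, parent^[n] v = root)
    (N τ₀ : ℝ) (hN : 0 ≤ N) (hτ : 1 ≤ τ₀)
    (μ : V → ℝ) (hμ : ∀ v : V, 0 ≤ μ v) (hμroot : μ root ≤ N)
    (hsum : ∀ x : V, (∃ v : V, v ≠ root ∧ parent v = x) →
      ∑ y ∈ Finset.univ.filter (fun y : V => y ≠ root ∧ parent y = x),
        τ₀ ^ (μ y - μ x) ≤ 1) :
    ((Finset.univ.filter (fun u : V => ¬ ∃ v : V, v ≠ root ∧ parent v = u)).card : ℝ) ≤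
      τ₀ ^ N := by
  have key := leaf_bound_aux root parent hroot hreach τ₀ hτ μ hμ hsum root
  have hsub : (Finset.univ.filter (fun u : V => ¬ ∃ v : V, v ≠ root ∧ parent v = u)) ⊆
      (Finset.univ.filter (fun w : V =>
        (¬ ∃ v : V, v ≠ root ∧ parent v = w) ∧ ∃ n : ℕ, parent^[n] w = root)) := by
    intro w hw
    rw [Finset.mem_filter] at hw ⊢
    exact ⟨hw.1, hw.2, hreach w⟩
  calc ((Finset.univ.filter (fun u : V => ¬ ∃ v : V, v ≠ root ∧ parent v = u)).card : ℝ)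
      ≤ _ := by exact_mod_cast Finset.card_le_card hsub
    _ ≤ τ₀ ^ (μ root) := key
    _ ≤ τ₀ ^ N := Real.rpow_le_rpow_of_exponent_le hτ hμroot
end

section
/- Let T be a 2-CNF theory each of whose clauses is of the form {a}, {a, b}, or {a, ¬b} for distinct atoms a and b, and let G be the directed graph with vertex set At(T) having a directed edge (a, b) whenever {¬a, b} ∈ T. Then At(T) is a model of T, and At(T) is a minimal model of T if and only if every 0-rank strongly connected component C of G contains all atoms of at least one positive clause of T. -/
open Classical

/-- The directed graph `G` on `At(T)`: an edge `(a, b)` whenever `{¬a, b} ∈ T`. -/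
def edgeRel (T : CTheory) (a b : ℕ) : Prop :=
  ({((false, a) : Lit), ((true, b) : Lit)} : Clause) ∈ T

/-- Reachability in `G` by directed paths (every vertex reachable from itself). -/
def reach (T : CTheory) : ℕ → ℕ → Prop := Relation.ReflTransGen (edgeRel T)

/-- A strongly connected component of `G`: a maximal set of vertices any two of which are
reachable from each other. -/
def isSCC (T : CTheory) (C : Set ℕ) : Prop :=
  C.Nonempty ∧ C ⊆ ↑(thAtoms T) ∧ (∀ a ∈ C, ∀ b ∈ C, reach T a b) ∧
    ∀ C' : Set ℕ, C ⊆ C' → C' ⊆ ↑(thAtoms T) →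
      (∀ a ∈ C', ∀ b ∈ C', reach T a b) → C' = C

/-- `C` has 0-rank: there is no edge `(a, b)` of `G` with `a ∉ C` and `b ∈ C`. -/
def zeroRank (T : CTheory) (C : Set ℕ) : Prop :=
  ∀ a b : ℕ, edgeRel T a b → b ∈ C → a ∈ C


lemma mem_thAtoms_of {T : CTheory} {c : Clause} (hc : c ∈ T) {l : Lit} (hl : l ∈ c) :
    l.2 ∈ thAtoms T :=
  Finset.mem_sup.2 ⟨c, hc, Finset.mem_image.2 ⟨l, hl, rfl⟩⟩

lemma reach_mem {T : CTheory} {M' : Finset ℕ} (hM : isModel M' T) {z w : ℕ}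
    (hz : z ∈ M') (h : reach T z w) : w ∈ M' := by
  induction h with
  | refl => exact hz
  | tail _hab hedge ih =>
    obtain ⟨l, hl, hsat⟩ := hM _ hedge
    rcases Finset.mem_insert.1 hl with rfl | hl'
    · exact absurd ih (by simpa [satLit] using hsat)
    · have hle : l = (true, _) := Finset.mem_singleton.1 hl'
      subst hle
      simpa [satLit] using hsat

/-- Let `T` be a 2-CNF theory whose clauses have the form `{a}`, `{a, b}` or `{a, ¬b}` for
distinct atoms `a`, `b`, and let `G` be the directed graph on `At(T)` with an edge `(a, b)`
whenever `{¬a, b} ∈ T`. Then `At(T)` is a model of `T`, and `At(T)` is a minimal model of `T`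
iff every 0-rank strongly connected component of `G` contains all atoms of at least one
positive clause of `T`. -/
theorem atoms_minModel_iff_scc (T : CTheory)
    (hform : ∀ c ∈ T,
      (∃ a : ℕ, c = ({((true, a) : Lit)} : Clause)) ∨
      (∃ a b : ℕ, a ≠ b ∧ c = ({((true, a) : Lit), ((true, b) : Lit)} : Clause)) ∨
      (∃ a b : ℕ, a ≠ b ∧ c = ({((true, a) : Lit), ((false, b) : Lit)} : Clause))) :
    isModel (thAtoms T) T ∧
    (isMinModel (thAtoms T) T ↔
      ∀ C : Set ℕ, isSCC T C → zeroRank T C →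
        ∃ c ∈ T, (∀ l ∈ c, l.1 = true) ∧ ∀ l ∈ c, l.2 ∈ C) := by
  classical
  have hmodel : isModel (thAtoms T) T := by
    intro c hc
    rcases hform c hc with ⟨a, rfl⟩ | ⟨a, b, hab, rfl⟩ | ⟨a, b, hab, rfl⟩ <;>
      exact ⟨(true, a), by simp, by
        simpa [satLit] using mem_thAtoms_of hc (l := (true, a)) (by simp)⟩
  refine ⟨hmodel, ?_, ?_⟩
  · -- minimal → SCC condition
    rintro ⟨_, _, hmin⟩ C hSCC h0
    by_contra hno
    push_neg at hno
    -- M' := thAtoms \ C is a proper model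
    set M' : Finset ℕ := (thAtoms T).filter (fun z => z ∉ C) with hM'def
    have hMsub : M' ⊆ thAtoms T := Finset.filter_subset _ _
    obtain ⟨y, hyC⟩ := hSCC.1
    have hyA : y ∈ thAtoms T := hSCC.2.1 hyC
    have hss : M' ⊂ thAtoms T := by
      refine ⟨hMsub, fun h => ?_⟩
      have := h hyA
      simp [hM'def, hyC] at this
    refine hmin M' hss ?_
    intro c hc
    rcases hform c hc with ⟨a, rfl⟩ | ⟨a, b, hab, rfl⟩ | ⟨a, b, hab, rfl⟩
    · obtain ⟨l, hl, hlC⟩ := hno _ hc (by simp)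
      rcases Finset.mem_singleton.1 hl with rfl
      refine ⟨(true, a), by simp, ?_⟩
      simp only [satLit, if_pos rfl, hM'def, Finset.mem_filter]
      exact ⟨mem_thAtoms_of hc (l := (true, a)) (by simp), by simpa using hlC⟩
    · obtain ⟨l, hl, hlC⟩ := hno _ hc (by
        intro l hl
        rcases Finset.mem_insert.1 hl with rfl | hl'
        · rfl
        · rcases Finset.mem_singleton.1 hl' with rfl; rfl)
      refine ⟨l, hl, ?_⟩
      have hl1 : l.1 = true := by
        rcases Finset.mem_insert.1 hl with rfl | hl'
        · rfl
        · rcases Finset.mem_singleton.1 hl' with rfl; rfl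
      simp only [satLit, hl1, if_pos rfl, hM'def, Finset.mem_filter]
      exact ⟨mem_thAtoms_of hc hl, hlC⟩
    · by_cases hb : b ∈ M'
      · -- b ∈ thAtoms, b ∉ C; edge b → a; zeroRank gives a ∉ C
        have hedge : edgeRel T b a := by
          have : ({((false, b) : Lit), ((true, a) : Lit)} : Clause)
              = ({((true, a) : Lit), ((false, b) : Lit)} : Clause) := Finset.pair_comm _ _
          rw [edgeRel, this]; exact hc
        have hbC : b ∉ C := by
          have := Finset.mem_filter.1 (hM'def ▸ hb)
          exact this.2
        have haC : a ∉ C := fun haC => hbC (h0 b a hedge haC)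
        refine ⟨(true, a), by simp, ?_⟩
        simp only [satLit, if_pos rfl, hM'def, Finset.mem_filter]
        exact ⟨mem_thAtoms_of hc (l := (true, a)) (by simp), haC⟩
      · exact ⟨(false, b), by simp, by simpa [satLit] using hb⟩
  · -- SCC condition → minimal
    intro H
    refine ⟨hmodel, subset_rfl, ?_⟩
    intro M' hss hM'
    obtain ⟨x, hxA, hxM⟩ := Finset.exists_of_ssubset hss
    -- ancestor finset
    let anc : ℕ → Finset ℕ := fun w => (thAtoms T).filter (fun z => reach T z w)
    have hUne : ((thAtoms T).filter (fun z => reach T z x)).Nonempty :=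
      ⟨x, Finset.mem_filter.2 ⟨hxA, Relation.ReflTransGen.refl⟩⟩
    obtain ⟨y, hyU, hymin⟩ := Finset.exists_min_image _ (fun w => (anc w).card) hUne
    obtain ⟨hyA, hyx⟩ := Finset.mem_filter.1 hyU
    have hyanc : y ∈ anc y := Finset.mem_filter.2 ⟨hyA, Relation.ReflTransGen.refl⟩
    -- every ancestor of y is reached from y
    have hback : ∀ z ∈ anc y, reach T y z := by
      intro z hz
      obtain ⟨hzA, hzy⟩ := Finset.mem_filter.1 hz
      have hzU : z ∈ (thAtoms T).filter (fun z => reach T z x) :=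
        Finset.mem_filter.2 ⟨hzA, hzy.trans hyx⟩
      have hsubz : anc z ⊆ anc y := by
        intro w hw
        obtain ⟨hwA, hwz⟩ := Finset.mem_filter.1 hw
        exact Finset.mem_filter.2 ⟨hwA, hwz.trans hzy⟩
      have hcard : (anc y).card ≤ (anc z).card := hymin z hzU
      have heq : anc z = anc y := Finset.eq_of_subset_of_card_le hsubz hcard
      have : y ∈ anc z := heq ▸ hyanc
      exact (Finset.mem_filter.1 this).2
    set C : Set ℕ := ↑(anc y) with hCdef
    have hCsub : C ⊆ ↑(thAtoms T) := by
      intro z hz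
      exact Finset.mem_coe.2 (Finset.mem_filter.1 (Finset.mem_coe.1 hz)).1
    have hSCC : isSCC T C := by
      refine ⟨⟨y, Finset.mem_coe.2 hyanc⟩, hCsub, ?_, ?_⟩
      · intro a ha b hb
        have h1 : reach T a y := (Finset.mem_filter.1 (Finset.mem_coe.1 ha)).2
        have h2 : reach T y b := hback b (Finset.mem_coe.1 hb)
        exact h1.trans h2
      · intro C' hCC' hC'A hmut
        apply Set.Subset.antisymm _ hCC'
        intro z hz
        have hzy : reach T z y := hmut z hz y (hCC' (Finset.mem_coe.2 hyanc))
        have hzA : z ∈ thAtoms T := Finset.mem_coe.1 (hC'A hz)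
        exact Finset.mem_coe.2 (Finset.mem_filter.2 ⟨hzA, hzy⟩)
    have h0 : zeroRank T C := by
      intro a b hedge hbC
      have hby : reach T b y := (Finset.mem_filter.1 (Finset.mem_coe.1 hbC)).2
      have hay : reach T a y := Relation.ReflTransGen.head hedge hby
      have haA : a ∈ thAtoms T := mem_thAtoms_of hedge (l := (false, a)) (by simp)
      exact Finset.mem_coe.2 (Finset.mem_filter.2 ⟨haA, hay⟩)
    obtain ⟨c, hc, hpos, hatoms⟩ := H C hSCC h0
    obtain ⟨l, hl, hsat⟩ := hM' c hc
    have hl1 : l.1 = true := hpos l hl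
    have hlM : l.2 ∈ M' := by simpa [satLit, hl1] using hsat
    have hlC : l.2 ∈ C := hatoms l hl
    have hly : reach T l.2 y := (Finset.mem_filter.1 (Finset.mem_coe.1 hlC)).2
    exact hxM (reach_mem hM' hlM (hly.trans hyx))
end

section
/- For every integer t ≥ 2 there exist positive real constants d_t, D_t and D'_t such that for every integer n ≥ 2t − 1 there is a t-CNF theory T with exactly n atoms whose size m (the total number of occurrences of literals in the clauses of T) satisfies m ≤ d_t·n, whose number of minimal models is at least D_t·μ_t^n, and such that the sum of the cardinalities of the minimal models of T is at least D'_t·n·μ_t^n, where μ_t = C(2t−1, t)^(1/(2t−1)) and C(·,·) denotes the binomial coefficient. -/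
open Classical

namespace TCNFAux
open Finset

def kk (t : ℕ) : ℕ := 2 * t - 1
def qq (t n : ℕ) : ℕ := n / kk t
def block (t i : ℕ) : Finset ℕ := Finset.Ico (i * kk t) (i * kk t + kk t)
def leftover (t n : ℕ) : Finset ℕ := Finset.Ico (qq t n * kk t) n
def posClause (S : Finset ℕ) : Clause := S.image (fun a => ((true, a) : Lit))
def Csets (t n : ℕ) : Finset (Finset ℕ) :=
  ((Finset.range (qq t n)).biUnion fun i => (block t i).powersetCard t) ∪
    (leftover t n).image (fun a => ({a} : Finset ℕ))
def Th (t n : ℕ) : CTheory := (Csets t n).image posClause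

lemma clauseAtoms_posClause (S : Finset ℕ) : clauseAtoms (posClause S) = S := by
  simp [clauseAtoms, posClause, Finset.image_image]

lemma posClause_inj : Function.Injective posClause := fun S₁ S₂ h => by
  rw [← clauseAtoms_posClause S₁, h, clauseAtoms_posClause]

lemma posClause_card (S : Finset ℕ) : (posClause S).card = S.card :=
  Finset.card_image_of_injective _ (fun a b h => by simpa using h)

lemma mem_Csets {t n : ℕ} {S : Finset ℕ} : S ∈ Csets t n ↔
    (∃ i < qq t n, S ⊆ block t i ∧ S.card = t) ∨ ∃ a ∈ leftover t n, S = {a} := by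
  constructor
  · rintro h
    rcases Finset.mem_union.mp h with h | h
    · obtain ⟨i, hi, hS⟩ := Finset.mem_biUnion.mp h
      rw [Finset.mem_powersetCard] at hS
      exact Or.inl ⟨i, Finset.mem_range.mp hi, hS.1, hS.2⟩
    · obtain ⟨a, ha, rfl⟩ := Finset.mem_image.mp h
      exact Or.inr ⟨a, ha, rfl⟩
  · rintro (⟨i, hi, h1, h2⟩ | ⟨a, ha, rfl⟩)
    · exact Finset.mem_union_left _ (Finset.mem_biUnion.mpr ⟨i, Finset.mem_range.mpr hi,
        Finset.mem_powersetCard.mpr ⟨h1, h2⟩⟩)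
    · exact Finset.mem_union_right _ (Finset.mem_image.mpr ⟨a, ha, rfl⟩)

lemma model_iff {t n : ℕ} {M : Finset ℕ} :
    isModel M (Th t n) ↔ ∀ S ∈ Csets t n, ∃ a ∈ S, a ∈ M := by
  simp [isModel, Th, posClause, satLit]

lemma block_card (t i : ℕ) : (block t i).card = kk t := by simp [block]

lemma blocks_disj (t : ℕ) {i j : ℕ} (h : i ≠ j) : Disjoint (block t i) (block t j) := by
  rw [Finset.disjoint_left]
  intro a ha hb
  simp only [block, Finset.mem_Ico] at ha hb
  rcases h.lt_or_gt with h | h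
  · have : (i + 1) * kk t ≤ j * kk t := Nat.mul_le_mul_right _ h
    rw [Nat.succ_mul] at this; omega
  · have : (j + 1) * kk t ≤ i * kk t := Nat.mul_le_mul_right _ h
    rw [Nat.succ_mul] at this; omega

lemma block_subset_range {t n i : ℕ} (hi : i < qq t n) : block t i ⊆ Finset.range n := by
  intro a ha
  simp only [block, Finset.mem_Ico] at ha
  have h1 : (i + 1) * kk t ≤ qq t n * kk t := Nat.mul_le_mul_right _ hi
  have h2 : qq t n * kk t ≤ n := Nat.div_mul_le_self n (kk t)
  rw [Nat.succ_mul] at h1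
  simp only [Finset.mem_range]
  omega

lemma Csets_sub {t n : ℕ} {S : Finset ℕ} (hS : S ∈ Csets t n) : S ⊆ Finset.range n := by
  rcases mem_Csets.mp hS with ⟨i, hi, hsub, -⟩ | ⟨a, ha, rfl⟩
  · exact hsub.trans (block_subset_range hi)
  · simp only [leftover, Finset.mem_Ico] at ha
    simp [Finset.singleton_subset_iff, ha.2]

lemma thAtoms_Th {t n : ℕ} (ht : 2 ≤ t) (hn : kk t ≤ n) : thAtoms (Th t n) = Finset.range n := by
  have hk : 0 < kk t := by simp [kk]; omega
  have htk : t ≤ kk t := by simp [kk]; omega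
  apply Finset.Subset.antisymm
  · intro a ha
    rw [thAtoms, Th, Finset.sup_image, Finset.mem_sup] at ha
    obtain ⟨S, hS, haS⟩ := ha
    simp only [Function.comp_apply, clauseAtoms_posClause] at haS
    exact Csets_sub hS haS
  · intro a ha
    simp only [Finset.mem_range] at ha
    have key : ∃ S ∈ Csets t n, a ∈ S := by
      by_cases hcase : a < qq t n * kk t
      · have hiq : a / kk t < qq t n := (Nat.div_lt_iff_lt_mul hk).mpr hcase
        have hblk : a ∈ block t (a / kk t) := by
          have h1 : kk t * (a / kk t) + a % kk t = a := Nat.div_add_mod a (kk t)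
          have h2 : a % kk t < kk t := Nat.mod_lt _ hk
          have h3 : a / kk t * kk t = kk t * (a / kk t) := Nat.mul_comm _ _
          simp only [block, Finset.mem_Ico]
          omega
        obtain ⟨S, hS1, hS2, hS3⟩ := Finset.exists_subsuperset_card_eq (n := t)
          (Finset.singleton_subset_iff.mpr hblk)
          (by simp only [Finset.card_singleton]; omega) (by rw [block_card]; exact htk)
        exact ⟨S, mem_Csets.mpr (Or.inl ⟨a / kk t, hiq, hS2, hS3⟩),
          hS1 (Finset.mem_singleton_self a)⟩
      · refine ⟨{a}, mem_Csets.mpr (Or.inr ⟨a, ?_, rfl⟩), Finset.mem_singleton_self a⟩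
        simp only [leftover, Finset.mem_Ico]; omega
    obtain ⟨S, hS, haS⟩ := key
    rw [thAtoms, Th, Finset.sup_image]
    have : a ∈ clauseAtoms (posClause S) := by rw [clauseAtoms_posClause]; exact haS
    exact Finset.le_sup (f := clauseAtoms ∘ posClause) hS this

lemma model_inter_block {t n : ℕ} (ht : 2 ≤ t) {M : Finset ℕ} (hM : isModel M (Th t n))
    {i : ℕ} (hi : i < qq t n) : t ≤ (M ∩ block t i).card := by
  by_contra h
  push_neg at h
  have e := Finset.card_inter_add_card_sdiff (block t i) M
  rw [block_card] at e
  have hic : (block t i ∩ M).card = (M ∩ block t i).card := by rw [Finset.inter_comm]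
  have hkt : kk t = 2 * t - 1 := rfl
  have hge : t ≤ (block t i \ M).card := by omega
  obtain ⟨S, hSsub, hScard⟩ := Finset.exists_subset_card_eq hge
  have hSC : S ∈ Csets t n :=
    mem_Csets.mpr (Or.inl ⟨i, hi, hSsub.trans (Finset.sdiff_subset), hScard⟩)
  obtain ⟨a, haS, haM⟩ := model_iff.mp hM S hSC
  exact (Finset.mem_sdiff.mp (hSsub haS)).2 haM

lemma model_card {t n : ℕ} (ht : 2 ≤ t) {M : Finset ℕ} (hM : isModel M (Th t n)) :
    qq t n * t ≤ M.card := by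
  have hdisj : ∀ i ∈ Finset.range (qq t n), ∀ j ∈ Finset.range (qq t n), i ≠ j →
      Disjoint (M ∩ block t i) (M ∩ block t j) := fun i _ j _ h =>
    (blocks_disj t h).mono Finset.inter_subset_right Finset.inter_subset_right
  calc qq t n * t = ∑ _i ∈ Finset.range (qq t n), t := by simp [mul_comm]
    _ ≤ ∑ i ∈ Finset.range (qq t n), (M ∩ block t i).card :=
        Finset.sum_le_sum fun i hi => model_inter_block ht hM (Finset.mem_range.mp hi)
    _ = ((Finset.range (qq t n)).biUnion fun i => M ∩ block t i).card :=
        (Finset.card_biUnion hdisj).symm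
    _ ≤ M.card := Finset.card_le_card (Finset.biUnion_subset.mpr fun i _ => Finset.inter_subset_left)

def Mf (t n : ℕ) (f : Fin (qq t n) → Finset ℕ) : Finset ℕ :=
  leftover t n ∪ Finset.univ.biUnion f

lemma Mf_inter_block {t n : ℕ} {f : Fin (qq t n) → Finset ℕ}
    (hf : ∀ i, f i ⊆ block t i.val) (i : Fin (qq t n)) :
    Mf t n f ∩ block t i.val = f i := by
  have hlo : Disjoint (leftover t n) (block t i.val) := by
    rw [Finset.disjoint_left]
    intro a ha hb
    simp only [leftover, Finset.mem_Ico] at ha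
    simp only [block, Finset.mem_Ico] at hb
    have h1 : (i.val + 1) * kk t ≤ qq t n * kk t := Nat.mul_le_mul_right _ i.isLt
    rw [Nat.succ_mul] at h1
    omega
  apply Finset.Subset.antisymm
  · intro a ha
    obtain ⟨haM, hab⟩ := Finset.mem_inter.mp ha
    rcases Finset.mem_union.mp haM with h | h
    · exact absurd hab (Finset.disjoint_left.mp hlo h)
    · obtain ⟨j, -, haj⟩ := Finset.mem_biUnion.mp h
      by_cases hij : j = i
      · exact hij ▸ haj
      · exact absurd hab
          (Finset.disjoint_left.mp (blocks_disj t (fun e => hij (Fin.ext e))) (hf j haj))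
  · intro a ha
    exact Finset.mem_inter.mpr ⟨Finset.mem_union_right _
      (Finset.mem_biUnion.mpr ⟨i, Finset.mem_univ i, ha⟩), hf i ha⟩

lemma Mf_subset_range {t n : ℕ} {f : Fin (qq t n) → Finset ℕ}
    (hf : ∀ i, f i ⊆ block t i.val) : Mf t n f ⊆ Finset.range n := by
  apply Finset.union_subset
  · intro a ha; simp only [leftover, Finset.mem_Ico] at ha; simp [ha.2]
  · exact Finset.biUnion_subset.mpr fun i _ => (hf i).trans (block_subset_range i.isLt)

lemma Mf_minModel {t n : ℕ} (ht : 2 ≤ t) (hn : kk t ≤ n) {f : Fin (qq t n) → Finset ℕ}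
    (hf : ∀ i, f i ⊆ block t i.val) (hfc : ∀ i, (f i).card = t) :
    isMinModel (Mf t n f) (Th t n) := by
  have hmodel : isModel (Mf t n f) (Th t n) := by
    rw [model_iff]
    intro S hS
    rcases mem_Csets.mp hS with ⟨i, hi, hsub, hcard⟩ | ⟨a, ha, rfl⟩
    · set i' : Fin (qq t n) := ⟨i, hi⟩
      have hnd : ¬ Disjoint S (f i') := by
        intro hd
        have h1 : S ∪ f i' ⊆ block t i := Finset.union_subset hsub (hf i')
        have h2 := Finset.card_le_card h1
        rw [Finset.card_union_of_disjoint hd, block_card, hcard, hfc i'] at h2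
        simp only [kk] at h2; omega
      obtain ⟨a, haS, haf⟩ := Finset.not_disjoint_iff.mp hnd
      exact ⟨a, haS, Finset.mem_union_right _ (Finset.mem_biUnion.mpr ⟨i', Finset.mem_univ _, haf⟩)⟩
    · exact ⟨a, Finset.mem_singleton_self a, Finset.mem_union_left _ ha⟩
  refine ⟨hmodel, by rw [thAtoms_Th ht hn]; exact Mf_subset_range hf, ?_⟩
  intro M' hM' hmod'
  obtain ⟨a, haM, haM'⟩ := Finset.exists_of_ssubset hM'
  rcases Finset.mem_union.mp haM with h | h
  · obtain ⟨b, hb, hbM'⟩ := model_iff.mp hmod' {a} (mem_Csets.mpr (Or.inr ⟨a, h, rfl⟩))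
    rw [Finset.mem_singleton] at hb
    exact haM' (hb ▸ hbM')
  · obtain ⟨i, -, hai⟩ := Finset.mem_biUnion.mp h
    have hle : (M' ∩ block t i.val).card ≤ t - 1 := by
      have hsub2 : M' ∩ block t i.val ⊆ f i \ {a} := by
        intro x hx
        obtain ⟨hx1, hx2⟩ := Finset.mem_inter.mp hx
        have hxM : x ∈ Mf t n f := hM'.subset hx1
        have : x ∈ f i := by
          rw [← Mf_inter_block hf i]; exact Finset.mem_inter.mpr ⟨hxM, hx2⟩
        refine Finset.mem_sdiff.mpr ⟨this, ?_⟩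
        simp only [Finset.mem_singleton]
        rintro rfl; exact haM' hx1
      calc (M' ∩ block t i.val).card ≤ (f i \ {a}).card := Finset.card_le_card hsub2
        _ = (f i).card - 1 := by
            rw [Finset.card_sdiff_of_subset (Finset.singleton_subset_iff.mpr hai)]; simp
        _ = t - 1 := by rw [hfc i]
    have := model_inter_block ht hmod' i.isLt
    omega

lemma count_lb {t n : ℕ} (ht : 2 ≤ t) (hn : kk t ≤ n) :
    ((kk t).choose t) ^ (qq t n) ≤
      ((thAtoms (Th t n)).powerset.filter (fun M => isMinModel M (Th t n))).card := by
  classical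
  set q := qq t n
  have key : (Fintype.piFinset fun i : Fin q => (block t i.val).powersetCard t).card ≤
      ((thAtoms (Th t n)).powerset.filter (fun M => isMinModel M (Th t n))).card := by
    apply Finset.card_le_card_of_injOn (Mf t n)
    · intro f hfmem
      rw [Finset.mem_coe, Fintype.mem_piFinset] at hfmem
      have hf : ∀ i, f i ⊆ block t i.val := fun i => (Finset.mem_powersetCard.mp (hfmem i)).1
      have hfc : ∀ i, (f i).card = t := fun i => (Finset.mem_powersetCard.mp (hfmem i)).2
      rw [Finset.mem_coe, Finset.mem_filter, Finset.mem_powerset]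
      exact ⟨by rw [thAtoms_Th ht hn]; exact Mf_subset_range hf, Mf_minModel ht hn hf hfc⟩
    · intro f hfmem g hgmem heq
      rw [Finset.mem_coe, Fintype.mem_piFinset] at hfmem hgmem
      funext i
      rw [← Mf_inter_block (fun i => (Finset.mem_powersetCard.mp (hfmem i)).1) i, heq,
        Mf_inter_block (fun i => (Finset.mem_powersetCard.mp (hgmem i)).1) i]
  calc ((kk t).choose t) ^ q = ∏ i : Fin q, ((block t i.val).powersetCard t).card := by
        simp [Finset.card_powersetCard, block_card]
    _ = (Fintype.piFinset fun i : Fin q => (block t i.val).powersetCard t).card :=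
        (Fintype.card_piFinset _).symm
    _ ≤ _ := key

lemma size_lb {t n : ℕ} (ht : 2 ≤ t) :
    (∑ c ∈ Th t n, c.card) ≤ (n * (kk t).choose t + n) * t := by
  have h1 : (∑ c ∈ Th t n, c.card) = ∑ S ∈ Csets t n, S.card := by
    rw [Th, Finset.sum_image (fun a _ b _ h => posClause_inj h)]
    exact Finset.sum_congr rfl fun S _ => posClause_card S
  have h2 : ∀ S ∈ Csets t n, S.card ≤ t := by
    intro S hS
    rcases mem_Csets.mp hS with ⟨i, -, -, hc⟩ | ⟨a, -, rfl⟩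
    · omega
    · simp; omega
  have h3 : (Csets t n).card ≤ n * (kk t).choose t + n := by
    calc (Csets t n).card ≤
        (((Finset.range (qq t n)).biUnion fun i => (block t i).powersetCard t)).card
          + ((leftover t n).image (fun a => ({a} : Finset ℕ))).card :=
          Finset.card_union_le _ _
      _ ≤ (∑ i ∈ Finset.range (qq t n), ((block t i).powersetCard t).card)
          + (leftover t n).card := by
          gcongr
          · exact Finset.card_biUnion_le
          · exact Finset.card_image_le
      _ ≤ n * (kk t).choose t + n := by
          have e1 : ∀ i, ((block t i).powersetCard t).card = (kk t).choose t := by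
            intro i; simp [Finset.card_powersetCard, block_card]
          rw [Finset.sum_congr rfl fun i _ => e1 i, Finset.sum_const, Finset.card_range,
            smul_eq_mul]
          have : qq t n ≤ n := Nat.div_le_self _ _
          have : (leftover t n).card ≤ n := by
            simp only [leftover, Nat.card_Ico]; omega
          gcongr <;> omega
  calc (∑ c ∈ Th t n, c.card) = ∑ S ∈ Csets t n, S.card := h1
    _ ≤ ∑ _S ∈ Csets t n, t := Finset.sum_le_sum h2
    _ = (Csets t n).card * t := by rw [Finset.sum_const, smul_eq_mul]
    _ ≤ (n * (kk t).choose t + n) * t := by gcongr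

lemma posClause_ok (S : Finset ℕ) : Clause.ok (posClause S) := by
  intro a ⟨_, h2⟩
  simp [posClause] at h2

lemma Csets_card_le {t n : ℕ} (ht : 2 ≤ t) {S : Finset ℕ} (hS : S ∈ Csets t n) :
    S.card ≤ t := by
  rcases mem_Csets.mp hS with ⟨i, -, -, hc⟩ | ⟨a, -, rfl⟩
  · omega
  · simp only [Finset.card_singleton]; omega

end TCNFAux

/-- For every `t ≥ 2` there are positive constants `d_t`, `D_t`, `D'_t` such that for every
`n ≥ 2t − 1` there is a `t`-CNF theory `T` with exactly `n` atoms, of size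
`m = ∑_{c ∈ T} |c| ≤ d_t·n`, with at least `D_t·μ_t^n` minimal models, the sum of whose
cardinalities is at least `D'_t·n·μ_t^n`, where `μ_t = C(2t−1, t)^(1/(2t−1))`. -/
theorem t_cnf_lower_bound (t : ℕ) (ht : 2 ≤ t) :
    ∃ d D D' : ℝ, 0 < d ∧ 0 < D ∧ 0 < D' ∧
      ∀ n : ℕ, 2 * t - 1 ≤ n →
        ∃ T : CTheory,
          (∀ c ∈ T, Clause.ok c) ∧ (∀ c ∈ T, c.card ≤ t) ∧
          (thAtoms T).card = n ∧
          ((∑ c ∈ T, c.card : ℕ) : ℝ) ≤ d * n ∧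
          D * (((Nat.choose (2 * t - 1) t : ℝ)) ^ ((1 : ℝ) / ((2 * t - 1 : ℕ) : ℝ))) ^ n ≤
            (((thAtoms T).powerset.filter (fun M => isMinModel M T)).card : ℝ) ∧
          D' * n * (((Nat.choose (2 * t - 1) t : ℝ)) ^ ((1 : ℝ) / ((2 * t - 1 : ℕ) : ℝ))) ^ n ≤
            ∑ M ∈ (thAtoms T).powerset.filter (fun M => isMinModel M T), (M.card : ℝ) := by
  classical
  open TCNFAux in
  have hkk : kk t = 2 * t - 1 := rfl
  have hkpos : 0 < kk t := by omega
  have htk : t ≤ kk t := by omega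
  set Cn : ℕ := (2 * t - 1).choose t with hCn
  have hCn1 : 1 ≤ Cn := Nat.choose_pos (by omega)
  set C : ℝ := (Cn : ℝ) with hC
  have hC1 : (1 : ℝ) ≤ C := by rw [hC]; exact_mod_cast hCn1
  have hCpos : (0 : ℝ) < C := by linarith
  set K : ℝ := ((2 * t - 1 : ℕ) : ℝ) with hKdef
  have hKpos : (0 : ℝ) < K := by
    rw [hKdef]; exact_mod_cast hkpos
  set μ : ℝ := C ^ ((1 : ℝ) / K) with hμ
  have hμpos : 0 < μ := Real.rpow_pos_of_pos hCpos _
  refine ⟨(C + 1) * t, C⁻¹, C⁻¹ / 4, ?_, ?_, ?_, ?_⟩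
  · have : (0:ℝ) < t := by exact_mod_cast (by omega : 0 < t)
    positivity
  · positivity
  · positivity
  intro n hn
  have hn' : kk t ≤ n := hn
  set q : ℕ := TCNFAux.qq t n with hq
  have hq1 : 1 ≤ q := (Nat.one_le_div_iff hkpos).mpr hn'
  have hcount := TCNFAux.count_lb (t := t) (n := n) ht hn'
  have hsize := TCNFAux.size_lb (t := t) (n := n) ht
  -- n ≤ (q+1) * (2t-1)
  have hnq : n ≤ (q + 1) * (2 * t - 1) := by
    have h1 := Nat.div_add_mod n (2 * t - 1)
    have h2 : n % (2 * t - 1) < 2 * t - 1 := Nat.mod_lt _ (by omega)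
    have hqe : q = n / (2 * t - 1) := hq
    have h3 : (q + 1) * (2 * t - 1) = (2 * t - 1) * (n / (2 * t - 1)) + (2 * t - 1) := by
      rw [hqe]; ring
    omega
  -- n ≤ 4 * q * t
  have hn4 : n ≤ 4 * q * t := by
    have h4 : (q + 1) * (2 * t - 1) ≤ (2 * q) * (2 * t - 1) :=
      Nat.mul_le_mul_right _ (by omega)
    have h5 : (2 * q) * (2 * t - 1) ≤ (2 * q) * (2 * t) :=
      Nat.mul_le_mul_left _ (by omega)
    have h6 : (2 * q) * (2 * t) = 4 * q * t := by ring
    omega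
  -- μ^n = C ^ (n/K)
  have hμn : μ ^ n = C ^ ((n : ℝ) / K) := by
    rw [hμ, ← Real.rpow_natCast (C ^ ((1 : ℝ) / K)) n, ← Real.rpow_mul (le_of_lt hCpos)]
    congr 1
    ring
  -- C⁻¹ * μ^n ≤ C^q  (as reals)
  have hmain : C⁻¹ * μ ^ n ≤ (Cn : ℝ) ^ q := by
    have hexp : (n : ℝ) / K ≤ (q : ℝ) + 1 := by
      rw [div_le_iff₀ hKpos]
      calc (n : ℝ) ≤ ((q + 1) * (2 * t - 1) : ℕ) := by exact_mod_cast hnq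
        _ = ((q : ℝ) + 1) * K := by push_cast; ring
    have h7 : C ^ ((n : ℝ) / K) ≤ C ^ ((q : ℝ) + 1) :=
      Real.rpow_le_rpow_of_exponent_le hC1 hexp
    have h8 : C ^ ((q : ℝ) + 1) = C ^ q * C := by
      rw [Real.rpow_add hCpos, Real.rpow_one, Real.rpow_natCast]
    calc C⁻¹ * μ ^ n = C⁻¹ * C ^ ((n : ℝ) / K) := by rw [hμn]
      _ ≤ C⁻¹ * (C ^ q * C) := by
          apply mul_le_mul_of_nonneg_left (h8 ▸ h7) (by positivity)
      _ = C ^ q := by field_simp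
      _ = (Cn : ℝ) ^ q := by rw [hC]
  have hcount' : C⁻¹ * μ ^ n ≤
      (((thAtoms (TCNFAux.Th t n)).powerset.filter
        (fun M => isMinModel M (TCNFAux.Th t n))).card : ℝ) := by
    calc C⁻¹ * μ ^ n ≤ (Cn : ℝ) ^ q := hmain
      _ = ((Cn ^ q : ℕ) : ℝ) := by push_cast; ring
      _ ≤ _ := by exact_mod_cast hcount
  refine ⟨TCNFAux.Th t n, ?_, ?_, ?_, ?_, ?_, ?_⟩
  · intro c hc
    obtain ⟨S, -, rfl⟩ := Finset.mem_image.mp hc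
    exact TCNFAux.posClause_ok S
  · intro c hc
    obtain ⟨S, hS, rfl⟩ := Finset.mem_image.mp hc
    rw [TCNFAux.posClause_card]
    exact TCNFAux.Csets_card_le ht hS
  · rw [TCNFAux.thAtoms_Th ht hn', Finset.card_range]
  · calc ((∑ c ∈ TCNFAux.Th t n, c.card : ℕ) : ℝ)
        ≤ (((n * Cn + n) * t : ℕ) : ℝ) := by exact_mod_cast hsize
      _ = (C + 1) * t * n := by push_cast; ring
  · exact hcount'
  · have hterm : ∀ M ∈ (thAtoms (TCNFAux.Th t n)).powerset.filter
        (fun M => isMinModel M (TCNFAux.Th t n)), ((q * t : ℕ) : ℝ) ≤ (M.card : ℝ) := by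
      intro M hM
      have hmm := (Finset.mem_filter.mp hM).2
      exact_mod_cast TCNFAux.model_card ht hmm.1
    have hsum : ((((thAtoms (TCNFAux.Th t n)).powerset.filter
          (fun M => isMinModel M (TCNFAux.Th t n))).card : ℝ)) * ((q * t : ℕ) : ℝ) ≤
        ∑ M ∈ (thAtoms (TCNFAux.Th t n)).powerset.filter
          (fun M => isMinModel M (TCNFAux.Th t n)), (M.card : ℝ) := by
      calc _ = ∑ _M ∈ (thAtoms (TCNFAux.Th t n)).powerset.filter
            (fun M => isMinModel M (TCNFAux.Th t n)), ((q * t : ℕ) : ℝ) := by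
            rw [Finset.sum_const, nsmul_eq_mul]
        _ ≤ _ := Finset.sum_le_sum hterm
    have hq4 : (n : ℝ) / 4 ≤ ((q * t : ℕ) : ℝ) := by
      rw [div_le_iff₀ (by norm_num : (0:ℝ) < 4)]
      calc (n : ℝ) ≤ ((4 * q * t : ℕ) : ℝ) := by exact_mod_cast hn4
        _ = ((q * t : ℕ) : ℝ) * 4 := by push_cast; ring
    calc C⁻¹ / 4 * n * μ ^ n = (C⁻¹ * μ ^ n) * ((n : ℝ) / 4) := by ring
      _ ≤ (((thAtoms (TCNFAux.Th t n)).powerset.filter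
            (fun M => isMinModel M (TCNFAux.Th t n))).card : ℝ) * ((q * t : ℕ) : ℝ) :=
          mul_le_mul hcount' hq4 (by positivity) (by positivity)
      _ ≤ _ := hsum
end

section
/- Let X be a finite set of atoms and t an integer with 2 ≤ t ≤ |X|, and let E_{t,X} be the CNF theory consisting of all clauses {a_1, …, a_t} where a_1, …, a_t are pairwise distinct atoms of X (all occurring positively). Then the minimal models of E_{t,X} are exactly the subsets of X of cardinality |X| − t + 1; in particular, E_{t,X} has exactly C(|X|, t−1) minimal models. -/
open Classical

/-- `E_{t,X}`: the CNF theory of all clauses consisting of `t` pairwise distinct (positive)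
atoms of `X`. -/
def Eth (t : ℕ) (X : Finset ℕ) : CTheory :=
  (X.powersetCard t).image (fun s => s.image (fun a => ((true, a) : Lit)))

lemma atoms_Eth (t : ℕ) (X : Finset ℕ) (ht : 1 ≤ t) (htX : t ≤ X.card) :
    thAtoms (Eth t X) = X := by
  apply Finset.Subset.antisymm
  · intro x hx
    rw [thAtoms, Finset.mem_sup] at hx
    obtain ⟨c, hc, hx⟩ := hx
    simp only [Eth, Finset.mem_image] at hc
    obtain ⟨s, hs, rfl⟩ := hc
    rw [Finset.mem_powersetCard] at hs
    have h : clauseAtoms (s.image (fun a => ((true, a) : Lit))) = s := by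
      simp [clauseAtoms, Finset.image_image]
    rw [h] at hx
    exact hs.1 hx
  · intro x hx
    obtain ⟨u, hxu, huX, hucard⟩ :=
      Finset.exists_subsuperset_card_eq (Finset.singleton_subset_iff.mpr hx)
        (by simpa using ht) htX
    have hc : u.image (fun a => ((true, a) : Lit)) ∈ Eth t X := by
      simp only [Eth, Finset.mem_image]
      exact ⟨u, Finset.mem_powersetCard.mpr ⟨huX, hucard⟩, rfl⟩
    have h : clauseAtoms (u.image (fun a => ((true, a) : Lit))) = u := by
      simp [clauseAtoms, Finset.image_image]
    rw [thAtoms, Finset.mem_sup]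
    exact ⟨_, hc, by rw [h]; exact hxu (Finset.mem_singleton_self x)⟩

lemma model_iff_Eth (t : ℕ) (X M : Finset ℕ) :
    isModel M (Eth t X) ↔ (X \ M).card < t := by
  constructor
  · intro h
    by_contra hc
    push_neg at hc
    obtain ⟨s, hs, hcard⟩ := Finset.exists_subset_card_eq hc
    have hmem : s.image (fun a => ((true, a) : Lit)) ∈ Eth t X := by
      simp only [Eth, Finset.mem_image]
      exact ⟨s, Finset.mem_powersetCard.mpr ⟨hs.trans Finset.sdiff_subset, hcard⟩, rfl⟩
    obtain ⟨l, hl, hsat⟩ := h _ hmem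
    simp only [Finset.mem_image] at hl
    obtain ⟨a, ha, rfl⟩ := hl
    simp only [satLit, if_true] at hsat
    have := hs ha
    rw [Finset.mem_sdiff] at this
    exact this.2 hsat
  · intro h c hc
    simp only [Eth, Finset.mem_image] at hc
    obtain ⟨s, hs, rfl⟩ := hc
    rw [Finset.mem_powersetCard] at hs
    have hns : ¬ s ⊆ X \ M := fun hsub => by
      have := Finset.card_le_card hsub; omega
    obtain ⟨a, ha, ha2⟩ := Finset.not_subset.mp hns
    have haM : a ∈ M := by
      have hax := hs.1 ha
      rw [Finset.mem_sdiff] at ha2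
      by_contra hm
      exact ha2 ⟨hax, hm⟩
    exact ⟨(true, a), Finset.mem_image_of_mem _ ha, by simp [satLit, haM]⟩

/-- For `2 ≤ t ≤ |X|`, the minimal models of `E_{t,X}` are exactly the subsets of `X` of
cardinality `|X| − t + 1`; in particular `E_{t,X}` has exactly `C(|X|, t−1)` minimal models. -/
theorem Eth_minimal_models (X : Finset ℕ) (t : ℕ) (ht : 2 ≤ t) (htX : t ≤ X.card) :
    (∀ M : Finset ℕ, isMinModel M (Eth t X) ↔ (M ⊆ X ∧ M.card = X.card - t + 1)) ∧
    (X.powerset.filter (fun M => isMinModel M (Eth t X))).card = X.card.choose (t - 1) := by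
  have key : ∀ M : Finset ℕ, isMinModel M (Eth t X) ↔ (M ⊆ X ∧ M.card = X.card - t + 1) := by
    intro M
    constructor
    · rintro ⟨hmod, hsub, hmin⟩
      rw [atoms_Eth t X (by omega) htX] at hsub
      have hmc := Finset.card_le_card hsub
      have h1 : (X \ M).card < t := (model_iff_Eth t X M).mp hmod
      rw [Finset.card_sdiff_of_subset hsub] at h1
      refine ⟨hsub, ?_⟩
      by_contra hne
      -- then X.card - M.card < t - 1, i.e. X.card - M.card + 1 < t
      have h2 : X.card - M.card + 1 < t := by omega
      have hMne : M.Nonempty := by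
        rcases Finset.eq_empty_or_nonempty M with h | h
        · subst h; simp at h1; omega
        · exact h
      obtain ⟨x, hx⟩ := hMne
      have hsub' : M.erase x ⊂ M := Finset.erase_ssubset hx
      apply hmin (M.erase x) hsub'
      rw [model_iff_Eth, Finset.card_sdiff_of_subset ((Finset.erase_subset x M).trans hsub)]
      have : (M.erase x).card = M.card - 1 := Finset.card_erase_of_mem hx
      have hM1 : 1 ≤ M.card := Finset.card_pos.mpr ⟨x, hx⟩
      omega
    · rintro ⟨hsub, hcard⟩
      have hmc := Finset.card_le_card hsub
      refine ⟨?_, ?_, ?_⟩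
      · rw [model_iff_Eth, Finset.card_sdiff_of_subset hsub]; omega
      · rw [atoms_Eth t X (by omega) htX]; exact hsub
      · intro M' hM'
        have hsub' : M' ⊆ X := hM'.1.trans hsub
        have hlt : M'.card < M.card := Finset.card_lt_card hM'
        rw [model_iff_Eth, Finset.card_sdiff_of_subset hsub']
        omega
  refine ⟨key, ?_⟩
  have hfil : X.powerset.filter (fun M => isMinModel M (Eth t X)) =
      X.powersetCard (X.card - t + 1) := by
    ext M
    simp only [Finset.mem_filter, Finset.mem_powerset, Finset.mem_powersetCard, key]
    tauto
  rw [hfil, Finset.card_powersetCard]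
  have h : X.card - t + 1 = X.card - (t - 1) := by omega
  rw [h, Nat.choose_symm (by omega)]
end
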